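/- arXiv:2411.02612 — 8 statements merged into one kernel-verified Lean document; each statement's English description precedes it below -/
import Mathlib

section
/- If f : 𝔽₂ⁿ → {0,1} is affine, constant-weighted, and no coordinate is constant on its support, then f is an EO signature: n is even and every vector in the support has Hamming weight n/2. -/
open Finset

/-- Hamming weight of a Boolean vector. -/
def wtB {ι : Type*} [Fintype ι] (a : ι → Bool) : ℕ :=
  (Finset.univ.filter fun i => a i = true).card

/-- Componentwise XOR of three Boolean vectors. -/
def xor3 {ι : Type*} (a b c : ι → Bool) : ι → Bool :=
  fun i => Bool.xor (a i) (Bool.xor (b i) (c i))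

/-- A (support of a) signature is affine if it is nonempty and closed under α⊕β⊕γ. -/
def AffineS {ι : Type*} [Fintype ι] [DecidableEq ι] (S : Finset (ι → Bool)) : Prop :=
  S.Nonempty ∧ ∀ a ∈ S, ∀ b ∈ S, ∀ c ∈ S, xor3 a b c ∈ S

theorem stmt1 {n : ℕ} (S : Finset (Fin n → Bool))
    (hA : AffineS S)
    (hcw : ∃ w, ∀ a ∈ S, wtB a = w)
    (hnc : ∀ i : Fin n, (∃ a ∈ S, a i = false) ∧ (∃ b ∈ S, b i = true)) :
    ∃ m : ℕ, n = 2 * m ∧ ∀ a ∈ S, wtB a = m := by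
  obtain ⟨w, hw⟩ := hcw
  obtain ⟨hne, hcl⟩ := hA
  have key : ∀ i : Fin n, (S.filter fun x => x i = true).card
      = (S.filter fun x => x i = false).card := by
    intro i
    obtain ⟨⟨a, haS, hai⟩, ⟨b, hbS, hbi⟩⟩ := hnc i
    have hmem : ∀ x ∈ S, xor3 a b x ∈ S := fun x hx => hcl a haS b hbS x hx
    have hflip : ∀ x : Fin n → Bool, (xor3 a b x) i = !(x i) := by
      intro x; simp [xor3, hai, hbi]
    have hinv : ∀ x : Fin n → Bool, xor3 a b (xor3 a b x) = x := by
      intro x; funext j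
      show Bool.xor (a j) (Bool.xor (b j) (Bool.xor (a j) (Bool.xor (b j) (x j)))) = x j
      cases a j <;> cases b j <;> cases x j <;> rfl
    apply Finset.card_bij' (fun x _ => xor3 a b x) (fun x _ => xor3 a b x)
    · intro x hx
      rw [Finset.mem_filter] at hx ⊢
      exact ⟨hmem x hx.1, by rw [hflip, hx.2]; rfl⟩
    · intro x hx
      rw [Finset.mem_filter] at hx ⊢
      exact ⟨hmem x hx.1, by rw [hflip, hx.2]; rfl⟩
    · intro x _; exact hinv x
    · intro x _; exact hinv x
  have sum_true : ∑ x ∈ S, (Finset.univ.filter fun i => x i = true).card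
      = ∑ i : Fin n, (S.filter fun x => x i = true).card := by
    simp only [Finset.card_filter]
    exact Finset.sum_comm
  have sum_false : ∑ x ∈ S, (Finset.univ.filter fun i => x i = false).card
      = ∑ i : Fin n, (S.filter fun x => x i = false).card := by
    simp only [Finset.card_filter]
    exact Finset.sum_comm
  have hsplit : ∀ x : Fin n → Bool,
      wtB x + (Finset.univ.filter fun i => x i = false).card = n := by
    intro x
    have := Finset.card_filter_add_card_filter_not
      (s := (Finset.univ : Finset (Fin n))) (p := fun i => x i = true)
    simpa [wtB, Bool.not_eq_true] using this
  have heq : ∑ x ∈ S, wtB x = ∑ x ∈ S, (Finset.univ.filter fun i => x i = false).card := by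
    have : ∑ x ∈ S, wtB x
        = ∑ x ∈ S, (Finset.univ.filter fun i => x i = true).card := rfl
    rw [this, sum_true, sum_false]
    exact Finset.sum_congr rfl fun i _ => key i
  have hsw : ∑ x ∈ S, wtB x = S.card * w := by
    rw [Finset.sum_congr rfl hw, Finset.sum_const, smul_eq_mul]
  have htot : S.card * n = 2 * (S.card * w) := by
    calc S.card * n = ∑ x ∈ S, n := by rw [Finset.sum_const, smul_eq_mul]
      _ = ∑ x ∈ S, (wtB x + (Finset.univ.filter fun i => x i = false).card) :=
          (Finset.sum_congr rfl fun x _ => (hsplit x).symm)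
      _ = ∑ x ∈ S, wtB x + ∑ x ∈ S, (Finset.univ.filter fun i => x i = false).card :=
          Finset.sum_add_distrib
      _ = S.card * w + S.card * w := by rw [← heq, hsw]
      _ = 2 * (S.card * w) := by ring
  have hcard : 0 < S.card := Finset.card_pos.mpr hne
  refine ⟨w, ?_, hw⟩
  have : S.card * n = S.card * (2 * w) := by rw [htot]; ring
  exact Nat.eq_of_mul_eq_mul_left hcard this
end

section
/- Every affine EO signature is pairwise opposite: if f : 𝔽₂^{2n} → {0,1} is affine and every support vector has Hamming weight n, then the 2n variables can be partitioned into n pairs such that in every support vector, the two variables of each pair take opposite values. -/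
open Finset

section aux

variable {ι : Type*} [LinearOrder ι]

/-- The `r`-th smallest element of `s` (default `d`). -/
def nthF (s : Finset ι) (r : ℕ) (d : ι) : ι := (s.sort (· ≤ ·)).getD r d

/-- The rank of `i` in `s`. -/
def rkF [DecidableEq ι] (s : Finset ι) (i : ι) : ℕ := (s.sort (· ≤ ·)).idxOf i

lemma rkF_lt [DecidableEq ι] {s : Finset ι} {i : ι} (h : i ∈ s) : rkF s i < s.card := by
  have := List.idxOf_lt_length_iff.2 ((Finset.mem_sort (α := ι) (· ≤ ·)).2 h)
  simpa [rkF, Finset.length_sort] using this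

lemma nthF_rkF [DecidableEq ι] {s : Finset ι} {i : ι} (h : i ∈ s) (d : ι) :
    nthF s (rkF s i) d = i := by
  have h' : rkF s i < (s.sort (· ≤ ·)).length := by
    simpa [Finset.length_sort] using rkF_lt h
  rw [nthF, List.getD_eq_getElem _ _ h']
  exact List.getElem_idxOf h'

lemma nthF_mem {s : Finset ι} {r : ℕ} (h : r < s.card) (d : ι) : nthF s r d ∈ s := by
  have h' : r < (s.sort (· ≤ ·)).length := by simpa [Finset.length_sort] using h
  rw [nthF, List.getD_eq_getElem _ _ h']
  exact (Finset.mem_sort (α := ι) (· ≤ ·)).1 (List.getElem_mem h')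

lemma rkF_nthF [DecidableEq ι] {s : Finset ι} {r : ℕ} (h : r < s.card) (d : ι) :
    rkF s (nthF s r d) = r := by
  have h' : r < (s.sort (· ≤ ·)).length := by simpa [Finset.length_sort] using h
  rw [nthF, List.getD_eq_getElem _ _ h', rkF]
  exact List.Nodup.idxOf_getElem (Finset.sort_nodup s _) r h'

end aux

set_option maxHeartbeats 1000000 in
theorem stmt2 {n : ℕ} (S : Finset (Fin (2 * n) → Bool))
    (hA : AffineS S)
    (hEO : ∀ a ∈ S, wtB a = n) :
    ∃ p : Fin (2 * n) → Fin (2 * n), Function.Involutive p ∧ (∀ i, p i ≠ i) ∧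
      ∀ a ∈ S, ∀ i, a (p i) = !(a i) := by
  classical
  obtain ⟨a₀, ha₀⟩ := hA.1
  -- classes of "same" and "opposite" coordinates
  let A : Fin (2 * n) → Finset (Fin (2 * n)) :=
    fun i => univ.filter fun j => ∀ a ∈ S, a j = a i
  let B : Fin (2 * n) → Finset (Fin (2 * n)) :=
    fun i => univ.filter fun j => ∀ a ∈ S, a j = !(a i)
  have memA : ∀ i j, j ∈ A i ↔ ∀ a ∈ S, a j = a i := by
    intro i j; simp [A]
  have memB : ∀ i j, j ∈ B i ↔ ∀ a ∈ S, a j = !(a i) := by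
    intro i j; simp [B]
  have hiA : ∀ i, i ∈ A i := fun i => (memA i i).2 fun a _ => rfl
  -- the key balance lemma : |A i| = |B i|
  have bal : ∀ i, (A i).card = (B i).card := by
    intro i
    -- total sum is zero, by EO
    have htot : ∑ j, ∑ a ∈ S, (if a i = a j then (1 : ℤ) else -1) = 0 := by
      rw [Finset.sum_comm]
      refine Finset.sum_eq_zero fun a haS => ?_
      have hwt : (univ.filter fun j => a j = true).card = n := hEO a haS
      have hwf : (univ.filter fun j => ¬(a j = true)).card = n := by
        have := Finset.card_filter_add_card_filter_not
          (s := (univ : Finset (Fin (2 * n)))) (p := fun j => a j = true)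
        simp only [Finset.card_univ, Fintype.card_fin] at this
        omega
      have key : ∀ (P : Fin (2 * n) → Prop) (_ : DecidablePred P),
          (univ.filter P).card = n →
          ∑ j, (if P j then (1 : ℤ) else -1) = 0 := by
        intro P _ hP
        have h1 : ∀ j, (if P j then (1 : ℤ) else -1)
            = 2 * (if P j then (1 : ℤ) else 0) - 1 := by
          intro j; by_cases h : P j <;> simp [h]
        rw [Finset.sum_congr rfl fun j _ => h1 j, Finset.sum_sub_distrib,
          ← Finset.mul_sum, Finset.sum_boole, hP, Finset.sum_const,
          Finset.card_univ, Fintype.card_fin, nsmul_eq_mul, mul_one]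
        push_cast
        ring
      by_cases hai : a i = true
      · have h0 := key (fun j => a j = true) inferInstance hwt
        rw [← h0]
        refine Finset.sum_congr rfl fun j _ => ?_
        by_cases h : a j = true <;> simp [h, hai]
      · have hif : a i = false := by simpa using hai
        have h0 := key (fun j => ¬(a j = true)) inferInstance hwf
        rw [← h0]
        refine Finset.sum_congr rfl fun j _ => ?_
        by_cases h : a j = true <;> simp [h, hif]
    -- value on A i
    have hTA : ∀ j ∈ A i, ∑ a ∈ S, (if a i = a j then (1 : ℤ) else -1) = S.card := by
      intro j hj
      have h1 : ∀ a ∈ S, (if a i = a j then (1 : ℤ) else -1) = 1 :=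
        fun a haS => if_pos ((memA i j).1 hj a haS).symm
      rw [Finset.sum_congr rfl h1, Finset.sum_const, nsmul_eq_mul, mul_one]
    -- value on B i
    have hTB : ∀ j ∈ B i, ∑ a ∈ S, (if a i = a j then (1 : ℤ) else -1)
        = -(S.card : ℤ) := by
      intro j hj
      have h1 : ∀ a ∈ S, (if a i = a j then (1 : ℤ) else -1) = -1 := by
        intro a haS
        refine if_neg ?_
        have h2 := (memB i j).1 hj a haS
        rw [h2]
        cases a i <;> simp
      rw [Finset.sum_congr rfl h1, Finset.sum_const, nsmul_eq_mul, mul_neg_one]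
    -- value elsewhere: zero by the involution a ↦ a ⊕ b ⊕ c
    have hT0 : ∀ j, j ∉ A i → j ∉ B i →
        ∑ a ∈ S, (if a i = a j then (1 : ℤ) else -1) = 0 := by
      intro j hjA hjB
      rw [memA] at hjA; rw [memB] at hjB
      push_neg at hjA hjB
      obtain ⟨b, hbS, hb'⟩ := hjA
      obtain ⟨c, hcS, hc⟩ := hjB
      have hc' : c j = c i := by
        cases hci : c i <;> cases hcj : c j <;> rw [hci, hcj] at hc <;> simp_all
      refine Finset.sum_involution (fun a _ => xor3 a b c) ?_ ?_
        (fun a haS => hA.2 a haS b hbS c hcS) ?_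
      · intro a haS
        have flip : ∀ x y u v w z : Bool, u ≠ v → w = z →
            ((xor x (xor u w) = xor y (xor v z)) ↔ ¬(x = y)) := by decide
        have h2 : (xor3 a b c) i = (xor3 a b c) j ↔ ¬ (a i = a j) :=
          flip (a i) (a j) (b i) (b j) (c i) (c j) (fun h => hb' h.symm) hc'.symm
        by_cases h : a i = a j
        · rw [if_pos h, if_neg (by rw [h2]; exact fun hk => hk h)]; ring
        · rw [if_neg h, if_pos (h2.2 h)]; ring
      · intro a ha hne hEq
        have key2 : ∀ x u w : Bool, xor x (xor u w) = x → u = w := by decide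
        have e1 : xor (a i) (xor (b i) (c i)) = a i := congrFun hEq i
        have e2 : xor (a j) (xor (b j) (c j)) = a j := congrFun hEq j
        exact hb' (by rw [key2 _ _ _ e2, hc', ← key2 _ _ _ e1])
      · intro a ha
        funext k
        show xor (xor (a k) (xor (b k) (c k))) (xor (b k) (c k)) = a k
        cases a k <;> cases b k <;> cases c k <;> rfl
    -- disjointness of A i and B i
    have hdisj : ∀ j, j ∈ A i → j ∉ B i := by
      intro j hj hj'
      have h1 := (memA i j).1 hj a₀ ha₀
      have h2 := (memB i j).1 hj' a₀ ha₀
      rw [h1] at h2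
      exact absurd h2 (by cases a₀ i <;> simp)
    -- combine
    have hdecomp : ∀ j, ∑ a ∈ S, (if a i = a j then (1 : ℤ) else -1)
        = (if j ∈ A i then (S.card : ℤ) else 0)
        + (if j ∈ B i then -(S.card : ℤ) else 0) := by
      intro j
      by_cases h1 : j ∈ A i
      · rw [if_pos h1, if_neg (hdisj j h1), hTA j h1]; ring
      · by_cases h2 : j ∈ B i
        · rw [if_neg h1, if_pos h2, hTB j h2]; ring
        · rw [if_neg h1, if_neg h2, hT0 j h1 h2]; ring
    rw [Finset.sum_congr rfl fun j _ => hdecomp j, Finset.sum_add_distrib,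
      Finset.sum_ite_mem, Finset.sum_ite_mem, Finset.univ_inter, Finset.univ_inter,
      Finset.sum_const, Finset.sum_const, nsmul_eq_mul, nsmul_eq_mul] at htot
    have hS0 : (0 : ℤ) < S.card := by
      exact_mod_cast Finset.card_pos.2 ⟨a₀, ha₀⟩
    have hmul : ((A i).card : ℤ) * S.card = (B i).card * S.card := by
      have : ((B i).card : ℤ) * -(S.card : ℤ) = -((B i).card * S.card) := by ring
      rw [this] at htot
      linarith
    have : ((A i).card : ℤ) = (B i).card := mul_right_cancel₀ (ne_of_gt hS0) hmul
    exact_mod_cast this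
  -- swap lemmas
  have hswap : ∀ i k, k ∈ B i → A k = B i ∧ B k = A i := by
    intro i k hk
    have hk' := (memB i k).1 hk
    constructor
    · ext j
      rw [memA, memB]
      constructor
      · intro h a haS; rw [h a haS, hk' a haS]
      · intro h a haS; rw [h a haS, hk' a haS]
    · ext j
      rw [memB, memA]
      constructor
      · intro h a haS; rw [h a haS, hk' a haS, Bool.not_not]
      · intro h a haS; rw [h a haS, hk' a haS, Bool.not_not]
  -- define the pairing
  let p : Fin (2 * n) → Fin (2 * n) := fun i => nthF (B i) (rkF (A i) i) i
  have hrlt : ∀ i, rkF (A i) i < (B i).card := by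
    intro i; rw [← bal i]; exact rkF_lt (hiA i)
  have hpB : ∀ i, p i ∈ B i := fun i => nthF_mem (hrlt i) i
  refine ⟨p, ?_, ?_, ?_⟩
  · intro i
    show nthF (B (p i)) (rkF (A (p i)) (p i)) (p i) = i
    obtain ⟨hA', hB'⟩ := hswap i _ (hpB i)
    rw [hA', hB']
    rw [show p i = nthF (B i) (rkF (A i) i) i from rfl, rkF_nthF (hrlt i)]
    exact nthF_rkF (hiA i) _
  · intro i hEq
    have h2 : p i ∈ B i := hpB i
    rw [hEq] at h2
    have h := (memB i i).1 h2 a₀ ha₀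
    exact absurd h (by cases a₀ i <;> simp)
  · intro a haS i
    exact (memB i _).1 (hpB i) a haS
end

section
/- Let f = δ₁^{⊗m} ⊗ h be a δ₁-affine kernel (m ≥ 1, h of positive arity, no coordinate of h constant, and every 0-pinning of h affine) with |S(f)| > 3. Let k₁ be such that column 1 of S(h) contains 2^{k₁} zeros, assumed maximal over all columns, and let l = #₁¹(h) be the number of ones in column 1. Then 2^{k₁−1} < l < 2^{k₁}. -/
open Finset

/-- Pinning variable `i` of a signature to the value `a`. -/
def pinS {ι : Type*} [Fintype ι] [DecidableEq ι] (S : Finset (ι → Bool)) (i : ι) (a : Bool) :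
    Finset ({j : ι // j ≠ i} → Bool) :=
  (S.filter fun x => x i = a).image fun x j => x j.1

/-- An EO signature: every support vector has Hamming weight equal to half the arity. -/
def IsEOS {ι : Type*} [Fintype ι] (S : Finset (ι → Bool)) : Prop :=
  ∀ a ∈ S, 2 * wtB a = Fintype.card ι

/-- `S` is a δ₁-affine kernel with set `T` of δ₁-coordinates:
`S = δ₁^{⊗|T|} ⊗ h` where `h` (the restriction of `S` to the coordinates outside `T`)
has positive arity, no constant coordinate, and every 0-pinning of `h` is affine
(pinning a coordinate `i ∉ T` of `S` to 0 is `δ₁^{⊗|T|} ⊗ h_i^0`, which is affine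
iff `h_i^0` is affine). -/
def IsKernelWith {ι : Type*} [Fintype ι] [DecidableEq ι]
    (S : Finset (ι → Bool)) (T : Finset ι) : Prop :=
  S.Nonempty ∧ IsEOS S ∧ T.Nonempty ∧ T ≠ Finset.univ ∧
  (∀ i ∈ T, ∀ x ∈ S, x i = true) ∧
  (∀ i ∉ T, (∃ x ∈ S, x i = false) ∧ (∃ x ∈ S, x i = true)) ∧
  (∀ i ∉ T, AffineS (pinS S i false))

section aux

set_option linter.unusedSectionVars false

variable {ι : Type*} [Fintype ι] [DecidableEq ι]

lemma z2_add_self : ∀ a : ZMod 2, a + a = 0 := by decide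
lemma z2_neg : ∀ a : ZMod 2, -a = a := by decide

def toZ2 : Bool → ZMod 2 := fun b => if b then 1 else 0

lemma toZ2_xor (a b : Bool) : toZ2 (Bool.xor a b) = toZ2 a + toZ2 b := by
  cases a <;> cases b <;> decide

lemma toZ2_inj : Function.Injective toZ2 := by decide

def phiZ : (ι → Bool) → (ι → ZMod 2) := fun x i => toZ2 (x i)

lemma phiZ_inj : Function.Injective (phiZ (ι := ι)) := fun x y h =>
  funext fun i => toZ2_inj (congrFun h i)

lemma phiZ_xor3 (a b c : ι → Bool) : phiZ (xor3 a b c) = phiZ a + phiZ b + phiZ c := by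
  funext i
  simp only [phiZ, xor3, toZ2_xor, Pi.add_apply]
  ring

/-- An affine (nonempty, xor3-closed) finset of Boolean vectors has power-of-2 cardinality. -/
lemma affine_card_pow2 (S : Finset (ι → Bool))
    (hne : S.Nonempty) (hcl : ∀ a ∈ S, ∀ b ∈ S, ∀ c ∈ S, xor3 a b c ∈ S) :
    ∃ k, S.card = 2 ^ k := by
  obtain ⟨a₀, ha₀⟩ := hne
  set F : Finset (ι → ZMod 2) := S.image (fun x => phiZ x + phiZ a₀) with hF
  have hFmem : ∀ u, u ∈ F ↔ ∃ x ∈ S, phiZ x + phiZ a₀ = u := by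
    intro u; simp [hF]
  have hzero : (0 : ι → ZMod 2) ∈ F := by
    rw [hFmem]
    exact ⟨a₀, ha₀, by funext i; exact z2_add_self _⟩
  have hadd : ∀ u ∈ F, ∀ v ∈ F, u + v ∈ F := by
    intro u hu v hv
    rw [hFmem] at hu hv ⊢
    obtain ⟨x, hx, hxu⟩ := hu
    obtain ⟨y, hy, hyv⟩ := hv
    refine ⟨xor3 x y a₀, hcl x hx y hy a₀ ha₀, ?_⟩
    rw [phiZ_xor3, ← hxu, ← hyv]
    abel
  have hneg : ∀ u ∈ F, -u ∈ F := by
    intro u hu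
    have : -u = u := by
      funext i; exact z2_neg _
    rwa [this]
  set H : AddSubgroup (ι → ZMod 2) :=
    { carrier := ↑F
      add_mem' := fun ha hb => hadd _ ha _ hb
      zero_mem' := hzero
      neg_mem' := fun ha => hneg _ ha } with hH
  have h1 : Nat.card H ∣ Nat.card (ι → ZMod 2) := AddSubgroup.card_addSubgroup_dvd_card H
  have h2 : Nat.card H = F.card := by
    have e : Nat.card H = Nat.card (↑F : Set (ι → ZMod 2)) :=
      Nat.card_congr ⟨fun x => ⟨x.1, x.2⟩, fun x => ⟨x.1, x.2⟩, fun x => rfl, fun x => rfl⟩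
    rw [e, Nat.card_coe_set_eq, Set.ncard_coe_finset]
  have h3 : Nat.card (ι → ZMod 2) = 2 ^ Fintype.card ι := by
    rw [Nat.card_eq_fintype_card, Fintype.card_fun, ZMod.card]
  have h4 : F.card = S.card := Finset.card_image_of_injective _ (fun x y h => by
    have := add_right_cancel h
    exact phiZ_inj this)
  rw [h2, h3, h4] at h1
  obtain ⟨k, _, hk⟩ := (Nat.dvd_prime_pow Nat.prime_two).mp h1
  exact ⟨k, hk⟩

/-- The cardinality of a pinning equals the number of support vectors with that value. -/
lemma pin_card (S : Finset (ι → Bool)) (i : ι) (b : Bool) :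
    (pinS S i b).card = (S.filter fun x => x i = b).card := by
  apply Finset.card_image_of_injOn
  intro x hx y hy hxy
  simp only [Finset.mem_coe, Finset.mem_filter] at hx hy
  funext j
  by_cases hj : j = i
  · subst hj; rw [hx.2, hy.2]
  · exact congrFun hxy ⟨j, hj⟩

/-- Pull back the affine closure of a pinning to the full support. -/
lemma closed_of_pin (S : Finset (ι → Bool)) (i : ι) (h : AffineS (pinS S i false)) :
    ∀ a ∈ S, ∀ b ∈ S, ∀ c ∈ S, a i = false → b i = false → c i = false →
      xor3 a b c ∈ S := by
  intro a ha b hb c hc hai hbi hci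
  have hmem : ∀ x ∈ S, x i = false → (fun j : {j : ι // j ≠ i} => x j.1) ∈ pinS S i false := by
    intro x hx hxi
    exact Finset.mem_image.mpr ⟨x, Finset.mem_filter.mpr ⟨hx, hxi⟩, rfl⟩
  have h3 := h.2 _ (hmem a ha hai) _ (hmem b hb hbi) _ (hmem c hc hci)
  simp only [pinS, Finset.mem_image, Finset.mem_filter] at h3
  obtain ⟨y, ⟨hy, hyi⟩, hyr⟩ := h3
  have : y = xor3 a b c := by
    funext j
    by_cases hj : j = i
    · subst hj
      rw [hyi]
      simp [xor3, hai, hbi, hci]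
    · exact congrFun hyr ⟨j, hj⟩
  rwa [this] at hy

/-- In a xor3-closed set, a non-constant column is exactly balanced. -/
lemma balanced_col (S : Finset (ι → Bool))
    (hcl : ∀ a ∈ S, ∀ b ∈ S, ∀ c ∈ S, xor3 a b c ∈ S)
    (i : ι) {p q : ι → Bool} (hp : p ∈ S) (hq : q ∈ S)
    (hpi : p i = false) (hqi : q i = true) :
    2 * (S.filter fun x => x i = false).card = S.card := by
  have key : (S.filter fun x => x i = false).card = (S.filter fun x => x i = true).card := by
    apply Finset.card_bij' (fun x _ => xor3 p q x) (fun x _ => xor3 p q x)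
    · intro x hx
      simp only [Finset.mem_filter] at hx ⊢
      exact ⟨hcl p hp q hq x hx.1, by simp [xor3, hpi, hqi, hx.2]⟩
    · intro x hx
      simp only [Finset.mem_filter] at hx ⊢
      exact ⟨hcl p hp q hq x hx.1, by simp [xor3, hpi, hqi, hx.2]⟩
    · intro x _
      funext j
      simp only [xor3]
      cases p j <;> cases q j <;> cases x j <;> rfl
    · intro x _
      funext j
      simp only [xor3]
      cases p j <;> cases q j <;> cases x j <;> rfl
  have hsplit := Finset.card_filter_add_card_filter_not (s := S)
    (p := fun x => x i = false)
  have e : S.filter (fun x => ¬ x i = false) = S.filter (fun x => x i = true) := by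
    apply Finset.filter_congr
    intro x _
    cases x i <;> simp
  rw [e] at hsplit
  rw [two_mul]
  nth_rewrite 2 [key]
  exact hsplit

/-- Double counting of zeros. -/
lemma sum_zeros (S : Finset (ι → Bool)) :
    ∑ i : ι, (S.filter fun x => x i = false).card
      = ∑ x ∈ S, (Finset.univ.filter fun i => x i = false).card := by
  simp only [Finset.card_filter]
  exact Finset.sum_comm

end aux

section arith

lemma arith_half {u k : ℕ} (hk : 1 ≤ k) (h : 2 * u = 2 ^ k) : u = 2 ^ (k - 1) := by
  have h2 : 2 ^ k = 2 * 2 ^ (k - 1) := by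
    rw [← pow_succ']
    congr 1
    omega
  omega

lemma arith_ub {s n tc N k : ℕ} (hn : 1 ≤ n) (ht : 1 ≤ tc) (hN : 2 * n = N)
    (h4 : s * n ≤ (N - tc) * k) (hk : 0 < k) : s < 2 * k := by
  have h5 : (N - tc) * k ≤ (2 * n - 1) * k := Nat.mul_le_mul_right k (by omega)
  have h6 : (2 * n - 1) * k < (2 * n) * k :=
    (Nat.mul_lt_mul_right hk).mpr (by omega)
  have h7 : s * n < (2 * k) * n := by
    calc s * n ≤ (N - tc) * k := h4
      _ ≤ (2 * n - 1) * k := h5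
      _ < (2 * n) * k := h6
      _ = (2 * k) * n := by ring
  exact Nat.lt_of_mul_lt_mul_right h7

lemma arith_k2 {l s k : ℕ} (hcard : 3 < s) (hs : 2 ^ k + l = s) (hl : l ≤ 2 ^ (k - 1)) :
    2 ≤ k := by
  by_contra hk
  push_neg at hk
  interval_cases k <;> simp_all <;> omega

lemma arith_pow_split {z u t e k : ℕ} (hk : 2 ≤ k) (hz : z = u + t) (hu : u = 2 ^ (k - 1))
    (hze : z = 2 ^ e) (hzle : z ≤ 2 ^ k) (ht1 : 1 ≤ t) (htl : t ≤ 2 ^ (k - 1)) :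
    t = 2 ^ (k - 1) := by
  have hpow : 2 ^ k = 2 * 2 ^ (k - 1) := by
    rw [← pow_succ']
    congr 1
    omega
  have he_ge : k ≤ e := by
    by_contra hlt
    push_neg at hlt
    have : 2 ^ e ≤ 2 ^ (k - 1) := Nat.pow_le_pow_right (by norm_num) (by omega)
    omega
  have h2 : 2 ^ k ≤ 2 ^ e := Nat.pow_le_pow_right (by norm_num) he_ge
  omega

lemma arith_contra {z u t e k l : ℕ} (hk : 2 ≤ k) (hz : z = u + t) (hu : 2 * u = 2 ^ k)
    (hze : z = 2 ^ e) (hzle : z ≤ 2 ^ k) (ht1 : 1 ≤ t) (htl : t < l)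
    (hl : l = 2 ^ (k - 1)) : False := by
  have hpow : 2 ^ k = 2 * 2 ^ (k - 1) := by
    rw [← pow_succ']
    congr 1
    omega
  have he_ge : k ≤ e := by
    by_contra hlt
    push_neg at hlt
    have : 2 ^ e ≤ 2 ^ (k - 1) := Nat.pow_le_pow_right (by norm_num) (by omega)
    omega
  have h2 : 2 ^ k ≤ 2 ^ e := Nat.pow_le_pow_right (by norm_num) he_ge
  omega

end arith

theorem stmt6 {N : ℕ} (S : Finset (Fin N → Bool)) (T : Finset (Fin N))
    (hK : IsKernelWith S T) (hcard : 3 < S.card)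
    (i₀ : Fin N) (hi₀ : i₀ ∉ T) (k₁ : ℕ)
    (hk₁ : (S.filter fun x => x i₀ = false).card = 2 ^ k₁)
    (hmax : ∀ i ∉ T, (S.filter fun x => x i = false).card ≤ 2 ^ k₁) :
    2 ^ (k₁ - 1) < (S.filter fun x => x i₀ = true).card ∧
      (S.filter fun x => x i₀ = true).card < 2 ^ k₁ := by
  obtain ⟨hne, hEO, hTne, hTuniv, hT1, hnc, haff⟩ := hK
  classical
  set S0 := S.filter (fun x => x i₀ = false) with hS0
  set S1 := S.filter (fun x => x i₀ = true) with hS1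
  have hS0S : ∀ x ∈ S0, x ∈ S := fun x hx => (Finset.mem_filter.mp hx).1
  have hS1S : ∀ x ∈ S1, x ∈ S := fun x hx => (Finset.mem_filter.mp hx).1
  -- the split of the cardinality of S
  have hS01 : S0.card + S1.card = S.card := by
    have hsp := Finset.card_filter_add_card_filter_not (s := S)
      (p := fun x => x i₀ = false)
    have e : S.filter (fun x => ¬ x i₀ = false) = S1 := by
      rw [hS1]; apply Finset.filter_congr; intro x _; cases x i₀ <;> simp
    rw [e] at hsp
    exact hsp
  -- basic quantities
  obtain ⟨x₀, hx₀⟩ := hne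
  have hN2 : 2 * wtB x₀ = N := by simpa using hEO x₀ hx₀
  have hn1 : 1 ≤ wtB x₀ := by
    obtain ⟨it, hit⟩ := hTne
    have h1 : x₀ it = true := hT1 it hit x₀ hx₀
    have h2 : it ∈ Finset.univ.filter (fun j => x₀ j = true) := by simp [h1]
    have := Finset.card_pos.mpr ⟨it, h2⟩
    simpa [wtB] using this
  have hT1card : 1 ≤ T.card := Finset.card_pos.mpr hTne
  -- number of zeros in each row is wtB x₀
  have hrow : ∀ x ∈ S, (Finset.univ.filter fun i : Fin N => x i = false).card = wtB x₀ := by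
    intro x hx
    have h2w := hEO x hx
    simp only [Fintype.card_fin] at h2w
    have hsp := Finset.card_filter_add_card_filter_not
      (s := (Finset.univ : Finset (Fin N))) (p := fun i => x i = true)
    have e : (Finset.univ : Finset (Fin N)).filter (fun i => ¬ x i = true)
        = Finset.univ.filter (fun i => x i = false) := by
      apply Finset.filter_congr; intro j _; cases x j <;> simp
    rw [e] at hsp
    have hcu : (Finset.univ : Finset (Fin N)).card = N := by simp
    have hwt : (Finset.univ.filter fun i => x i = true).card = wtB x := rfl
    rw [hwt, hcu] at hsp
    have hwx : wtB x = wtB x₀ := by linarith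
    linarith
  -- columns in T have no zeros
  have hzT : ∀ i ∈ T, (S.filter fun x => x i = false).card = 0 := by
    intro i hi
    rw [Finset.card_eq_zero, Finset.filter_eq_empty_iff]
    intro x hx
    simp [hT1 i hi x hx]
  have hzle : ∀ i : Fin N, (S.filter fun x => x i = false).card ≤ 2 ^ k₁ := by
    intro i
    by_cases hi : i ∈ T
    · rw [hzT i hi]; positivity
    · exact hmax i hi
  -- each column count is a power of two
  have hz_pow : ∀ i ∉ T, ∃ e, (S.filter fun x => x i = false).card = 2 ^ e := by
    intro i hi
    obtain ⟨hne', hcl'⟩ := haff i hi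
    obtain ⟨e, he⟩ := affine_card_pow2 (pinS S i false) hne' hcl'
    exact ⟨e, by rw [← pin_card S i false]; exact he⟩
  -- column splits
  have hzsplit : ∀ j : Fin N, (S.filter fun x => x j = false).card
      = (S0.filter fun x => x j = false).card + (S1.filter fun x => x j = false).card := by
    intro j
    have hsp := Finset.card_filter_add_card_filter_not
      (s := S.filter fun x => x j = false) (p := fun x => x i₀ = false)
    have e0 : (S.filter fun x => x j = false).filter (fun x => x i₀ = false)
        = S0.filter (fun x => x j = false) := by
      rw [hS0]; ext x
      simp only [Finset.mem_filter]; tauto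
    have e1 : (S.filter fun x => x j = false).filter (fun x => ¬ x i₀ = false)
        = S1.filter (fun x => x j = false) := by
      rw [hS1]; ext x
      simp only [Finset.mem_filter, Bool.not_eq_false]; tauto
    rw [e0, e1] at hsp
    linarith
  -- total sums of zeros
  have hsumS : ∑ i : Fin N, (S.filter fun x => x i = false).card = S.card * wtB x₀ := by
    rw [sum_zeros, Finset.sum_congr rfl (fun x hx => hrow x hx), Finset.sum_const,
      smul_eq_mul]
  have hsum0 : ∑ i : Fin N, (S0.filter fun x => x i = false).card = 2 ^ k₁ * wtB x₀ := by
    rw [sum_zeros, Finset.sum_congr rfl (fun x hx => hrow x (hS0S x hx)), Finset.sum_const,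
      smul_eq_mul, hk₁]
  have hsum1 : ∑ i : Fin N, (S1.filter fun x => x i = false).card = S1.card * wtB x₀ := by
    rw [sum_zeros, Finset.sum_congr rfl (fun x hx => hrow x (hS1S x hx)), Finset.sum_const,
      smul_eq_mul]
  have hp : 0 < 2 ^ k₁ := by positivity
  -- upper bound : S.card < 2 * 2^k₁
  have hub : S.card < 2 * 2 ^ k₁ := by
    have h1 : ∑ i : Fin N, (S.filter fun x => x i = false).card
        = ∑ i ∈ Finset.univ \ T, (S.filter fun x => x i = false).card := by
      apply (Finset.sum_subset (Finset.subset_univ _) _).symm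
      intro i _ hi
      have hiT : i ∈ T := by simpa using hi
      exact hzT i hiT
    have h2 : ∑ i ∈ Finset.univ \ T, (S.filter fun x => x i = false).card
        ≤ (Finset.univ \ T).card * 2 ^ k₁ := by
      calc ∑ i ∈ Finset.univ \ T, (S.filter fun x => x i = false).card
          ≤ ∑ _i ∈ Finset.univ \ T, 2 ^ k₁ :=
            Finset.sum_le_sum (fun i _ => hzle i)
        _ = (Finset.univ \ T).card * 2 ^ k₁ := by rw [Finset.sum_const, smul_eq_mul]
    have h3 : (Finset.univ \ T).card = N - T.card := by
      rw [Finset.card_sdiff_of_subset (Finset.subset_univ T)]; simp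
    have h4 : S.card * wtB x₀ ≤ (N - T.card) * 2 ^ k₁ := by
      rw [← hsumS, h1, ← h3]; exact h2
    exact arith_ub hn1 hT1card hN2 h4 hp
  have hubfin : S1.card < 2 ^ k₁ := by linarith
  refine ⟨?_, hubfin⟩
  -- lower bound, by contradiction
  by_contra hcon
  push_neg at hcon
  have hl : S1.card ≤ 2 ^ (k₁ - 1) := hcon
  have hS01' : 2 ^ k₁ + S1.card = S.card := by rw [← hk₁]; exact hS01
  have hk2 : 2 ≤ k₁ := arith_k2 hcard hS01' hl
  have hS1ne : 1 ≤ S1.card := by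
    obtain ⟨x, hx, hxi⟩ := (hnc i₀ hi₀).2
    exact Finset.card_pos.mpr ⟨x, Finset.mem_filter.mpr ⟨hx, hxi⟩⟩
  -- S0 is xor3-closed
  have hS0cl : ∀ a ∈ S0, ∀ b ∈ S0, ∀ c ∈ S0, xor3 a b c ∈ S0 := by
    intro a ha b hb c hc
    obtain ⟨haS, hai⟩ := Finset.mem_filter.mp ha
    obtain ⟨hbS, hbi⟩ := Finset.mem_filter.mp hb
    obtain ⟨hcS, hci⟩ := Finset.mem_filter.mp hc
    refine Finset.mem_filter.mpr
      ⟨closed_of_pin S i₀ (haff i₀ hi₀) a haS b hbS c hcS hai hbi hci, ?_⟩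
    simp [xor3, hai, hbi, hci]
  -- there is a column with zeros in both S0 and S1
  have hexist : ∃ i : Fin N, 1 ≤ (S1.filter fun x => x i = false).card ∧
      1 ≤ (S0.filter fun x => x i = false).card := by
    by_contra hno
    push_neg at hno
    set Z := Finset.univ.filter (fun i : Fin N => 1 ≤ (S0.filter fun x => x i = false).card)
      with hZ
    set W := Finset.univ.filter (fun i : Fin N => 1 ≤ (S1.filter fun x => x i = false).card)
      with hW
    have hdisj : Disjoint Z W := by
      rw [Finset.disjoint_left]
      intro i hiZ hiW
      rw [hZ, Finset.mem_filter] at hiZ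
      rw [hW, Finset.mem_filter] at hiW
      exact absurd hiZ.2 (Nat.not_le.mpr (hno i hiW.2))
    have hZcard : wtB x₀ ≤ Z.card := by
      have h1 : ∑ i : Fin N, (S0.filter fun x => x i = false).card
          = ∑ i ∈ Z, (S0.filter fun x => x i = false).card := by
        apply (Finset.sum_subset (Finset.subset_univ _) _).symm
        intro i _ hi
        rw [hZ, Finset.mem_filter] at hi
        push_neg at hi
        exact Nat.lt_one_iff.mp (hi (Finset.mem_univ i))
      have h2 : ∑ i ∈ Z, (S0.filter fun x => x i = false).card ≤ Z.card * 2 ^ k₁ := by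
        calc ∑ i ∈ Z, (S0.filter fun x => x i = false).card
            ≤ ∑ _i ∈ Z, 2 ^ k₁ := by
              apply Finset.sum_le_sum
              intro i _
              calc (S0.filter fun x => x i = false).card
                  ≤ (S.filter fun x => x i = false).card :=
                    Finset.card_le_card
                      (Finset.filter_subset_filter _ (Finset.filter_subset _ _))
                _ ≤ 2 ^ k₁ := hzle i
          _ = Z.card * 2 ^ k₁ := by rw [Finset.sum_const, smul_eq_mul]
      have h3 : 2 ^ k₁ * wtB x₀ ≤ 2 ^ k₁ * Z.card := by
        rw [← hsum0, h1]
        calc ∑ i ∈ Z, (S0.filter fun x => x i = false).card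
            ≤ Z.card * 2 ^ k₁ := h2
          _ = 2 ^ k₁ * Z.card := by ring
      exact Nat.le_of_mul_le_mul_left h3 hp
    have hWcard : wtB x₀ ≤ W.card := by
      have h1 : ∑ i : Fin N, (S1.filter fun x => x i = false).card
          = ∑ i ∈ W, (S1.filter fun x => x i = false).card := by
        apply (Finset.sum_subset (Finset.subset_univ _) _).symm
        intro i _ hi
        rw [hW, Finset.mem_filter] at hi
        push_neg at hi
        exact Nat.lt_one_iff.mp (hi (Finset.mem_univ i))
      have h2 : ∑ i ∈ W, (S1.filter fun x => x i = false).card ≤ W.card * S1.card := by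
        calc ∑ i ∈ W, (S1.filter fun x => x i = false).card
            ≤ ∑ _i ∈ W, S1.card :=
              Finset.sum_le_sum (fun i _ => Finset.card_filter_le _ _)
          _ = W.card * S1.card := by rw [Finset.sum_const, smul_eq_mul]
      have h3 : S1.card * wtB x₀ ≤ S1.card * W.card := by
        rw [← hsum1, h1]
        calc ∑ i ∈ W, (S1.filter fun x => x i = false).card
            ≤ W.card * S1.card := h2
          _ = S1.card * W.card := by ring
      exact Nat.le_of_mul_le_mul_left h3 hS1ne
    -- Z and W avoid T
    have hZT : ∀ i ∈ Z, i ∉ T := by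
      intro i hiZ hiT
      rw [hZ, Finset.mem_filter] at hiZ
      have h0 : (S0.filter fun x => x i = false).card ≤ (S.filter fun x => x i = false).card :=
        Finset.card_le_card (Finset.filter_subset_filter _ (Finset.filter_subset _ _))
      have := hzT i hiT
      have := hiZ.2
      linarith
    have hWT : ∀ i ∈ W, i ∉ T := by
      intro i hiW hiT
      rw [hW, Finset.mem_filter] at hiW
      have h0 : (S1.filter fun x => x i = false).card ≤ (S.filter fun x => x i = false).card := by
        rw [hzsplit i]; linarith
      have := hzT i hiT
      have := hiW.2
      linarith
    have hsub : Z ∪ W ⊆ Finset.univ \ T := by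
      intro i hi
      rcases Finset.mem_union.mp hi with h | h
      · exact Finset.mem_sdiff.mpr ⟨Finset.mem_univ i, hZT i h⟩
      · exact Finset.mem_sdiff.mpr ⟨Finset.mem_univ i, hWT i h⟩
    have h1 := Finset.card_le_card hsub
    rw [Finset.card_union_of_disjoint hdisj] at h1
    have h3 : (Finset.univ \ T).card = N - T.card := by
      rw [Finset.card_sdiff_of_subset (Finset.subset_univ T)]; simp
    have h5 : N - T.card ≤ N - 1 := Nat.sub_le_sub_left hT1card N
    have h6 : N - 1 < N := Nat.sub_lt (by linarith) one_pos
    linarith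
  obtain ⟨i, hti, hui⟩ := hexist
  -- data from the column i
  obtain ⟨b, hb⟩ := Finset.card_pos.mp hui
  obtain ⟨hbS0, hbi⟩ := Finset.mem_filter.mp hb
  obtain ⟨a1, ha1⟩ := Finset.card_pos.mp hti
  obtain ⟨ha1S1, ha1i⟩ := Finset.mem_filter.mp ha1
  have hiT : i ∉ T := by
    intro hiT
    have := hT1 i hiT a1 (hS1S a1 ha1S1)
    rw [ha1i] at this
    exact Bool.false_ne_true this
  -- a non-constant column on S0 is balanced
  have hbal : ∀ j : Fin N, (∃ p ∈ S0, p j = false) → (∃ q ∈ S0, q j = true) →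
      2 * (S0.filter fun x => x j = false).card = 2 ^ k₁ := by
    rintro j ⟨p, hp, hpj⟩ ⟨q, hq, hqj⟩
    rw [← hk₁]
    exact balanced_col S0 hS0cl j hp hq hpj hqj
  have hui_val : (S0.filter fun x => x i = false).card = 2 ^ (k₁ - 1) := by
    by_cases hcst : ∃ q ∈ S0, q i = true
    · exact arith_half (Nat.one_le_of_lt hk2) (hbal i ⟨b, hbS0, hbi⟩ hcst)
    · exfalso
      push_neg at hcst
      have hall0 : S0.filter (fun x => x i = false) = S0 := by
        apply Finset.filter_true_of_mem
        intro x hx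
        cases h : x i
        · rfl
        · exact absurd h (by simpa using hcst x hx)
      have h1 : 2 ^ k₁ + 1 ≤ (S.filter fun x => x i = false).card := by
        rw [hzsplit i, hall0, hk₁]
        have := hti
        linarith
      have := hzle i
      linarith
  -- hence t_i = 2^(k₁-1) and S1.card = 2^(k₁-1)
  obtain ⟨e, he⟩ := hz_pow i hiT
  have ht_card : (S1.filter fun x => x i = false).card ≤ S1.card :=
    Finset.card_filter_le _ _
  have hti1 : (S1.filter fun x => x i = false).card = 2 ^ (k₁ - 1) :=
    arith_pow_split hk2 (hzsplit i) hui_val he (hzle i) hti (le_trans ht_card hl)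
  have hcard1 : S1.card = 2 ^ (k₁ - 1) := le_antisymm hl (hti1 ▸ ht_card)
  have hS1_all0 : ∀ x ∈ S1, x i = false := by
    have heq : S1.filter (fun x => x i = false) = S1 := by
      apply Finset.eq_of_subset_of_card_le (Finset.filter_subset _ _)
      rw [hti1, hcard1]
    intro x hx
    have : x ∈ S1.filter (fun x => x i = false) := by rw [heq]; exact hx
    exact (Finset.mem_filter.mp this).2
  -- the final contradiction machine
  have final : ∀ p ∈ S1, ∀ p' ∈ S1, ∀ j : Fin N, p j = false → p' j = true →
      (∃ pp ∈ S0, pp j = false) → (∃ qq ∈ S0, qq j = true) → False := by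
    intro p hp p' hp' j hpj hp'j hex0 hex1
    have hjT : j ∉ T := by
      intro hjT
      have := hT1 j hjT p (hS1S p hp)
      rw [hpj] at this
      exact Bool.false_ne_true this
    have huj : 2 * (S0.filter fun x => x j = false).card = 2 ^ k₁ := hbal j hex0 hex1
    have htj1 : 1 ≤ (S1.filter fun x => x j = false).card :=
      Finset.card_pos.mpr ⟨p, Finset.mem_filter.mpr ⟨hp, hpj⟩⟩
    have htj2 : (S1.filter fun x => x j = false).card < S1.card := by
      rcases Nat.lt_or_ge (S1.filter fun x => x j = false).card S1.card with h | h
      · exact h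
      · exfalso
        have heq : S1.filter (fun x => x j = false) = S1 :=
          Finset.eq_of_subset_of_card_le (Finset.filter_subset _ _) h
        have : p' ∈ S1.filter (fun x => x j = false) := by rw [heq]; exact hp'
        have := (Finset.mem_filter.mp this).2
        rw [hp'j] at this
        exact Bool.noConfusion this
    obtain ⟨e', he'⟩ := hz_pow j hjT
    exact arith_contra hk2 (hzsplit j) huj he' (hzle j) htj1 htj2 hcard1
  -- get two distinct elements of S1
  have h2card : 1 < S1.card := by
    rw [hcard1]
    exact Nat.one_lt_two_pow_iff.mpr (Nat.sub_ne_zero_of_lt hk2)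
  obtain ⟨a, haS1, a', ha'S1, hane⟩ := Finset.one_lt_card.mp h2card
  -- c = xor3 a a' b ∈ S0
  have hai : a i = false := hS1_all0 a haS1
  have ha'i : a' i = false := hS1_all0 a' ha'S1
  have hcS : xor3 a a' b ∈ S :=
    closed_of_pin S i (haff i hiT) a (hS1S a haS1) a' (hS1S a' ha'S1) b (hS0S b hbS0)
      hai ha'i hbi
  have hai₀ : a i₀ = true := (Finset.mem_filter.mp haS1).2
  have ha'i₀ : a' i₀ = true := (Finset.mem_filter.mp ha'S1).2
  have hbi₀ : b i₀ = false := (Finset.mem_filter.mp hbS0).2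
  have hcS0 : xor3 a a' b ∈ S0 := by
    refine Finset.mem_filter.mpr ⟨hcS, ?_⟩
    simp [xor3, hai₀, ha'i₀, hbi₀]
  -- find a coordinate where a and a' differ
  have hdiff : ∃ j : Fin N, a j ≠ a' j := by
    by_contra hd
    push_neg at hd
    exact hane (funext hd)
  obtain ⟨j, hj⟩ := hdiff
  -- b and xor3 a a' b differ at j
  have hbc : (xor3 a a' b) j = ! b j := by
    simp only [xor3]
    cases h1 : a j <;> cases h2 : a' j <;> (try (exfalso; rw [h1, h2] at hj; exact hj rfl)) <;>
      cases b j <;> rfl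
  cases h1 : a j
  · cases h2 : a' j
    · rw [h1, h2] at hj; exact hj rfl
    · cases h3 : b j
      · exact final a haS1 a' ha'S1 j h1 h2 ⟨b, hbS0, h3⟩
          ⟨xor3 a a' b, hcS0, by simp [hbc, h3]⟩
      · exact final a haS1 a' ha'S1 j h1 h2 ⟨xor3 a a' b, hcS0, by simp [hbc, h3]⟩
          ⟨b, hbS0, h3⟩
  · cases h2 : a' j
    · cases h3 : b j
      · exact final a' ha'S1 a haS1 j h2 h1 ⟨b, hbS0, h3⟩
          ⟨xor3 a a' b, hcS0, by simp [hbc, h3]⟩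
      · exact final a' ha'S1 a haS1 j h2 h1 ⟨xor3 a a' b, hcS0, by simp [hbc, h3]⟩
          ⟨b, hbS0, h3⟩
    · rw [h1, h2] at hj; exact hj rfl
end

section
/- If f is a basic δ₁-affine kernel (a δ₁-affine kernel with exactly one δ₁ factor, i.e., f = δ₁ ⊗ h with δ₀, δ₁ ∤ h) of arity 2^k, then for every positive integer m, the m-multiple f_{×m} is a δ₁-affine kernel of arity m·2^k. -/
open Finset

/-- The m-multiple of a signature. -/
def multS {ι : Type*} [Fintype ι] [DecidableEq ι] (m : ℕ) (S : Finset (ι → Bool)) :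
    Finset (Fin m × ι → Bool) :=
  S.image fun a p => a p.2

lemma affine_pin_closed {ι : Type*} [Fintype ι] [DecidableEq ι]
    {S : Finset (ι → Bool)} {i : ι} (h : AffineS (pinS S i false))
    {a b c : ι → Bool} (ha : a ∈ S) (hai : a i = false)
    (hb : b ∈ S) (hbi : b i = false) (hc : c ∈ S) (hci : c i = false) :
    xor3 a b c ∈ S ∧ xor3 a b c i = false := by
  have hmem : ∀ {x : ι → Bool}, x ∈ S → x i = false →
      (fun j : {j : ι // j ≠ i} => x j.1) ∈ pinS S i false := by
    intro x hx hxi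
    exact Finset.mem_image.2 ⟨x, Finset.mem_filter.2 ⟨hx, hxi⟩, rfl⟩
  obtain ⟨_, hcl⟩ := h
  have hx3 := hcl _ (hmem ha hai) _ (hmem hb hbi) _ (hmem hc hci)
  obtain ⟨d, hd, hde⟩ := Finset.mem_image.1 hx3
  obtain ⟨hdS, hdi⟩ := Finset.mem_filter.1 hd
  have heq : xor3 a b c = d := by
    funext j
    by_cases hj : j = i
    · subst hj; simp [xor3, hai, hbi, hci, hdi]
    · exact (congrFun hde ⟨j, hj⟩).symm
  rw [heq]; exact ⟨hdS, hdi⟩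

theorem stmt8 {k : ℕ} (S : Finset (Fin (2 ^ k) → Bool)) (T : Finset (Fin (2 ^ k)))
    (hK : IsKernelWith S T) (hbasic : T.card = 1) (m : ℕ) (hm : 1 ≤ m) :
    ∃ T' : Finset (Fin m × Fin (2 ^ k)), IsKernelWith (multS m S) T' := by
  obtain ⟨hSne, hEO, hTne, hTnu, hT1, hTex, hTaff⟩ := hK
  haveI : NeZero m := ⟨Nat.one_le_iff_ne_zero.mp hm⟩
  refine ⟨Finset.univ ×ˢ T, ?_, ?_, ?_, ?_, ?_, ?_, ?_⟩
  · exact hSne.image _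
  · -- EOS
    intro x hx
    obtain ⟨a, haS, rfl⟩ := Finset.mem_image.1 hx
    have hfil : (Finset.univ.filter fun p : Fin m × Fin (2 ^ k) => a p.2 = true)
        = Finset.univ ×ˢ (Finset.univ.filter fun i => a i = true) := by
      ext p; simp [Finset.mem_product]
    have hw : wtB (fun p : Fin m × Fin (2 ^ k) => a p.2) = m * wtB a := by
      simp [wtB, hfil, Finset.card_product]
    rw [hw, Fintype.card_prod, Fintype.card_fin, Fintype.card_fin]
    have h2 := hEO a haS
    rw [Fintype.card_fin] at h2
    calc 2 * (m * wtB a) = m * (2 * wtB a) := by ring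
      _ = m * 2 ^ k := by rw [h2]
  · obtain ⟨i, hi⟩ := hTne
    exact ⟨(⟨0, hm⟩, i), Finset.mem_product.2 ⟨Finset.mem_univ _, hi⟩⟩
  · intro hcon
    have hex : ∃ i, i ∉ T := by
      by_contra h; push_neg at h; exact hTnu (Finset.eq_univ_iff_forall.2 h)
    obtain ⟨i, hi⟩ := hex
    have : ((⟨0, hm⟩ : Fin m), i) ∈ Finset.univ ×ˢ T := hcon ▸ Finset.mem_univ _
    exact hi (Finset.mem_product.1 this).2
  · intro p hp x hx
    obtain ⟨a, haS, rfl⟩ := Finset.mem_image.1 hx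
    exact hT1 p.2 (Finset.mem_product.1 hp).2 a haS
  · intro p hp
    have hp2 : p.2 ∉ T := fun h => hp (Finset.mem_product.2 ⟨Finset.mem_univ _, h⟩)
    obtain ⟨⟨a, haS, hai⟩, ⟨b, hbS, hbi⟩⟩ := hTex p.2 hp2
    exact ⟨⟨_, Finset.mem_image.2 ⟨a, haS, rfl⟩, hai⟩, ⟨_, Finset.mem_image.2 ⟨b, hbS, rfl⟩, hbi⟩⟩
  · intro p hp
    have hp2 : p.2 ∉ T := fun h => hp (Finset.mem_product.2 ⟨Finset.mem_univ _, h⟩)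
    have haff := hTaff p.2 hp2
    obtain ⟨⟨a, haS, hai⟩, _⟩ := hTex p.2 hp2
    constructor
    · exact ⟨_, Finset.mem_image.2 ⟨_, Finset.mem_filter.2
        ⟨Finset.mem_image.2 ⟨a, haS, rfl⟩, hai⟩, rfl⟩⟩
    · intro x hx y hy z hz
      obtain ⟨x', hx', rfl⟩ := Finset.mem_image.1 hx
      obtain ⟨hx'M, hx'p⟩ := Finset.mem_filter.1 hx'
      obtain ⟨a, haS, rfl⟩ := Finset.mem_image.1 hx'M
      obtain ⟨y', hy', rfl⟩ := Finset.mem_image.1 hy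
      obtain ⟨hy'M, hy'p⟩ := Finset.mem_filter.1 hy'
      obtain ⟨b, hbS, rfl⟩ := Finset.mem_image.1 hy'M
      obtain ⟨z', hz', rfl⟩ := Finset.mem_image.1 hz
      obtain ⟨hz'M, hz'p⟩ := Finset.mem_filter.1 hz'
      obtain ⟨c, hcS, rfl⟩ := Finset.mem_image.1 hz'M
      obtain ⟨hdS, hdi⟩ := affine_pin_closed haff haS hx'p hbS hy'p hcS hz'p
      refine Finset.mem_image.2 ⟨fun q => xor3 a b c q.2, Finset.mem_filter.2
        ⟨Finset.mem_image.2 ⟨_, hdS, rfl⟩, hdi⟩, ?_⟩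
      funext j
      rfl
end

section
/- The balanced 1-Hadamard code of block length 2^k (k ≥ 3), viewed as a 0-1 valued signature of arity 2^k, is a basic δ₁-affine kernel: it is an EO signature of the form δ₁ ⊗ h with no variable of h constant, and every 0-pinning of h is affine. -/
open Finset

/-- Sylvester's inductive construction of the Hadamard matrix `H_{2^k}`, with rows and
columns indexed by bit strings of length `k`: `H_1 = [1]` and
`H_{2^{k+1}} = [[H_{2^k}, H_{2^k}], [H_{2^k}, -H_{2^k}]]`, the sign `-1` occurring
exactly in the bottom-right block (first bit of both row and column index is 1). -/
def Had : (k : ℕ) → (Fin k → Bool) → (Fin k → Bool) → ℤ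
  | 0, _, _ => 1
  | k + 1, u, v =>
      (if u 0 && v 0 then (-1 : ℤ) else 1) * Had k (u ∘ Fin.succ) (v ∘ Fin.succ)

/-- The 1-Hadamard code: rows of `H_{2^k}` with `+1 ↦ 1` and `-1 ↦ 0`. -/
def Hcode1 (k : ℕ) : Finset ((Fin k → Bool) → Bool) :=
  Finset.univ.image fun u => fun v => decide (Had k u v = 1)

/-- The balanced 1-Hadamard code: the 1-Hadamard code with the all-ones codeword removed. -/
def Hbal1 (k : ℕ) : Finset ((Fin k → Bool) → Bool) :=
  (Hcode1 k).erase fun _ => true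

namespace St10

variable {k : ℕ}

/-- mod-2 inner product -/
def ip (u v : Fin k → Bool) : ZMod 2 :=
  ∑ i, ((u i).toNat : ZMod 2) * ((v i).toNat : ZMod 2)

/-- codeword from row u -/
def cw (k : ℕ) (u : Fin k → Bool) : (Fin k → Bool) → Bool := fun v => decide (ip u v = 0)

/-- standard basis vector -/
def e (j : Fin k) : Fin k → Bool := fun i => decide (i = j)

lemma toNat_xor (a b : Bool) : ((Bool.xor a b).toNat : ZMod 2) = a.toNat + b.toNat := by
  cases a <;> cases b <;> decide

lemma had_eq (u v : Fin k → Bool) :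
    Had k u v = ∏ i, (-1 : ℤ) ^ ((u i).toNat * (v i).toNat) := by
  induction k with
  | zero => simp [Had]
  | succ n ih =>
      rw [Had, ih, Fin.prod_univ_succ]
      congr 1
      cases u 0 <;> cases v 0 <;> norm_num

lemma had_one_iff (u v : Fin k → Bool) : Had k u v = 1 ↔ ip u v = 0 := by
  rw [had_eq, Finset.prod_pow_eq_pow_sum,
    neg_one_pow_eq_one_iff_even (by norm_num : (-1 : ℤ) ≠ 1),
    even_iff_two_dvd, ← ZMod.natCast_eq_zero_iff]
  push_cast [ip]
  rfl

lemma ip_xor_left (a b v : Fin k → Bool) :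
    ip (fun i => Bool.xor (a i) (b i)) v = ip a v + ip b v := by
  unfold ip
  rw [← Finset.sum_add_distrib]
  exact Finset.sum_congr rfl fun i _ => by rw [toNat_xor, add_mul]

lemma ip_xor3_left (a b c v : Fin k → Bool) :
    ip (xor3 a b c) v = ip a v + ip b v + ip c v := by
  have : xor3 a b c = fun i => Bool.xor (a i) (Bool.xor (b i) (c i)) := rfl
  rw [this]
  have h := ip_xor_left a (fun i => Bool.xor (b i) (c i)) v
  rw [h, ip_xor_left, add_assoc]

lemma ip_e_right (u : Fin k → Bool) (j : Fin k) : ip u (e j) = (u j).toNat := by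
  unfold ip e
  rw [Fintype.sum_eq_single j]
  · simp
  · intro i hi
    simp [hi]

lemma ip_e_left (j : Fin k) (v : Fin k → Bool) : ip (e j) v = (v j).toNat := by
  unfold ip e
  rw [Fintype.sum_eq_single j]
  · simp
  · intro i hi
    simp [hi]

lemma ip_xor_right (u v w : Fin k → Bool) :
    ip u (fun i => Bool.xor (v i) (w i)) = ip u v + ip u w := by
  unfold ip
  rw [← Finset.sum_add_distrib]
  exact Finset.sum_congr rfl fun i _ => by rw [toNat_xor, mul_add]

lemma mem_Hcode1 {x : (Fin k → Bool) → Bool} : x ∈ Hcode1 k ↔ ∃ u, x = cw k u := by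
  unfold Hcode1
  rw [Finset.mem_image]
  constructor
  · rintro ⟨u, -, rfl⟩
    exact ⟨u, funext fun v => by simp [cw, had_one_iff]⟩
  · rintro ⟨u, rfl⟩
    exact ⟨u, Finset.mem_univ _, funext fun v => by simp [cw, had_one_iff]⟩

lemma cw_ne_allones {u : Fin k → Bool} (j : Fin k) (hj : u j = true) :
    cw k u ≠ fun _ => true := by
  intro h
  have := congrFun h (e j)
  rw [cw, ip_e_right, hj] at this
  simp at this

lemma mem_Hbal1 {x : (Fin k → Bool) → Bool} :
    x ∈ Hbal1 k ↔ (∃ u, x = cw k u) ∧ x ≠ fun _ => true := by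
  rw [Hbal1, Finset.mem_erase, mem_Hcode1]; tauto

lemma cw_mem_Hbal1 {u : Fin k → Bool} (j : Fin k) (hj : u j = true) :
    cw k u ∈ Hbal1 k :=
  mem_Hbal1.mpr ⟨⟨u, rfl⟩, cw_ne_allones j hj⟩

lemma zmod2_ne_zero {x : ZMod 2} (h : x ≠ 0) : x = 1 := by
  revert h; revert x; decide

lemma decide_xor3 (p1 p2 p3 : ZMod 2) :
    decide (p1 + p2 + p3 = 0)
      = Bool.xor (decide (p1 = 0)) (Bool.xor (decide (p2 = 0)) (decide (p3 = 0))) := by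
  revert p1 p2 p3; decide

lemma wt_cw {u : Fin k → Bool} {j : Fin k} (hj : u j = true) :
    2 * wtB (cw k u) = 2 ^ k := by
  classical
  have hcard : (Finset.univ.filter fun v : Fin k → Bool => cw k u v = true).card
      = (Finset.univ.filter fun v : Fin k → Bool => ¬ (cw k u v = true)).card := by
    apply Finset.card_bij' (fun v _ => fun i => Bool.xor (v i) (e j i))
        (fun v _ => fun i => Bool.xor (v i) (e j i))
    · intro v hv
      simp only [Finset.mem_filter, Finset.mem_univ, true_and, cw,
        decide_eq_true_eq] at hv ⊢
      rw [ip_xor_right, ip_e_right, hj, hv]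
      decide
    · intro v hv
      simp only [Finset.mem_filter, Finset.mem_univ, true_and, cw,
        decide_eq_true_eq] at hv ⊢
      rw [ip_xor_right, ip_e_right, hj]
      have h1 : ip u v = 1 := zmod2_ne_zero hv
      rw [h1]
      decide
    · intro v _; funext i; simp [Bool.xor_assoc]
    · intro v _; funext i; simp [Bool.xor_assoc]
  have htot := Finset.card_filter_add_card_filter_not
      (s := (Finset.univ : Finset (Fin k → Bool)))
      (p := fun v => cw k u v = true)
  have hcardu : (Finset.univ : Finset (Fin k → Bool)).card = 2 ^ k := by
    simp [Finset.card_univ]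
  rw [wtB]
  omega

end St10

open St10

theorem stmt10 {k : ℕ} (hk : 3 ≤ k) :
    ∃ T : Finset (Fin k → Bool), T.card = 1 ∧ IsKernelWith (Hbal1 k) T := by
  classical
  have j0 : Fin k := ⟨0, by omega⟩
  have e_self : ∀ j : Fin k, e j j = true := fun j => by simp [e]
  -- any nonzero coordinate vector gives a member of Hbal1
  have exist_j : ∀ v₀ : Fin k → Bool, v₀ ∉ ({fun _ => false} : Finset (Fin k → Bool)) →
      ∃ j, v₀ j = true := by
    intro v₀ hv₀
    by_contra hcon
    push_neg at hcon
    exact hv₀ (Finset.mem_singleton.mpr (funext fun i =>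
      Bool.eq_false_iff.mpr (by simpa using hcon i)))
  refine ⟨{fun _ => false}, Finset.card_singleton _, ?_, ?_, ?_, ?_, ?_, ?_, ?_⟩
  · -- Nonempty
    exact ⟨cw k (e j0), cw_mem_Hbal1 j0 (e_self j0)⟩
  · -- IsEOS
    intro x hx
    obtain ⟨⟨u, rfl⟩, hne⟩ := mem_Hbal1.mp hx
    have hex : ∃ j, u j = true := by
      by_contra hcon
      push_neg at hcon
      apply hne
      funext v
      have hip : ip u v = 0 := by
        unfold ip
        apply Finset.sum_eq_zero
        intro i _
        have : u i = false := Bool.eq_false_iff.mpr (by simpa using hcon i)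
        simp [this]
      simp [cw, hip]
    obtain ⟨j, hj⟩ := hex
    rw [wt_cw hj]
    simp
  · -- T nonempty
    exact ⟨_, Finset.mem_singleton_self _⟩
  · -- T ≠ univ
    intro h
    have h2 : (fun _ => true : Fin k → Bool) ∈ ({fun _ => false} : Finset (Fin k → Bool)) :=
      h ▸ Finset.mem_univ _
    rw [Finset.mem_singleton] at h2
    exact absurd (congrFun h2 j0) (by simp)
  · -- all x take value true on T
    intro i hi x hx
    rw [Finset.mem_singleton] at hi
    subst hi
    obtain ⟨⟨u, rfl⟩, -⟩ := mem_Hbal1.mp hx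
    have hip : ip u (fun _ => false) = 0 := by
      unfold ip; apply Finset.sum_eq_zero; intro i _; simp
    simp [cw, hip]
  · -- no constant coordinate outside T
    intro v₀ hv₀
    obtain ⟨j, hj⟩ := exist_j v₀ hv₀
    constructor
    · refine ⟨cw k (e j), cw_mem_Hbal1 j (e_self j), ?_⟩
      have : ip (e j) v₀ = 1 := by rw [ip_e_left, hj]; rfl
      simp [cw, this]
    · by_cases hall : ∀ i, v₀ i = true
      · -- use e j1 ⊕ e j2
        have hne01 : (⟨0, by omega⟩ : Fin k) ≠ ⟨1, by omega⟩ := by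
          intro h
          have : (0 : ℕ) = 1 := congrArg Fin.val h
          omega
        set j1 : Fin k := ⟨0, by omega⟩
        set j2 : Fin k := ⟨1, by omega⟩
        refine ⟨cw k (fun i => Bool.xor (e j1 i) (e j2 i)), cw_mem_Hbal1 j1 ?_, ?_⟩
        · simp [e, hne01]
        · have : ip (fun i => Bool.xor (e j1 i) (e j2 i)) v₀ = 0 := by
            rw [ip_xor_left, ip_e_left, ip_e_left, hall j1, hall j2]; decide
          simp [cw, this]
      · push_neg at hall
        obtain ⟨j', hj'⟩ := hall
        refine ⟨cw k (e j'), cw_mem_Hbal1 j' (e_self j'), ?_⟩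
        have : ip (e j') v₀ = 0 := by
          rw [ip_e_left, Bool.eq_false_iff.mpr hj']; rfl
        simp [cw, this]
  · -- affinity of 0-pinnings
    intro v₀ hv₀
    obtain ⟨j, hj⟩ := exist_j v₀ hv₀
    have hmem : ∀ u : Fin k → Bool, ip u v₀ = 1 →
        cw k u ∈ (Hbal1 k).filter fun x => x v₀ = false := by
      intro u hu
      refine Finset.mem_filter.mpr ⟨?_, by simp [cw, hu]⟩
      refine mem_Hbal1.mpr ⟨⟨u, rfl⟩, ?_⟩
      intro hcon
      have := congrFun hcon v₀
      rw [cw, hu] at this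
      simp at this
    constructor
    · -- nonempty
      refine ⟨fun jj => cw k (e j) jj.1, ?_⟩
      rw [pinS, Finset.mem_image]
      exact ⟨cw k (e j), hmem (e j) (by rw [ip_e_left, hj]; rfl), rfl⟩
    · intro a ha b hb c hc
      rw [pinS, Finset.mem_image] at ha hb hc ⊢
      obtain ⟨x1, hx1, rfl⟩ := ha
      obtain ⟨x2, hx2, rfl⟩ := hb
      obtain ⟨x3, hx3, rfl⟩ := hc
      rw [Finset.mem_filter] at hx1 hx2 hx3
      obtain ⟨⟨u1, rfl⟩, -⟩ := id (mem_Hbal1.mp hx1.1)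
      obtain ⟨⟨u2, rfl⟩, -⟩ := id (mem_Hbal1.mp hx2.1)
      obtain ⟨⟨u3, rfl⟩, -⟩ := id (mem_Hbal1.mp hx3.1)
      have hip : ∀ u : Fin k → Bool, cw k u v₀ = false → ip u v₀ = 1 := by
        intro u hu
        apply zmod2_ne_zero
        intro h0
        rw [cw, h0] at hu
        simp at hu
      have h1 := hip u1 hx1.2
      have h2 := hip u2 hx2.2
      have h3 := hip u3 hx3.2
      refine ⟨cw k (xor3 u1 u2 u3), hmem _ (by rw [ip_xor3_left, h1, h2, h3]; decide), ?_⟩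
      funext jj
      show cw k (xor3 u1 u2 u3) jj.1 = _
      rw [cw, ip_xor3_left, decide_xor3]
      rfl
end

section
/- Let f be a real-valued EO signature of arity 2n ≥ 4. Then f satisfies ARS (f(α) = f(ᾱ) for all α) if and only if for all distinct indices i,j, the signature f^{x_i ≠ x_j}, defined by f^{x_i≠x_j}(β) = f_{ij}^{01}(β) + f_{ij}^{10}(β), satisfies ARS. -/
open Finset

/-- Componentwise complement. -/
def cmpl {ι : Type*} (a : ι → Bool) : ι → Bool := fun i => !(a i)

/-- A real-valued EO signature vanishes on all vectors whose weight is not half the arity. -/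
def IsEOR {ι : Type*} [Fintype ι] (f : (ι → Bool) → ℝ) : Prop :=
  ∀ a, 2 * wtB a ≠ Fintype.card ι → f a = 0

/-- Arrow reversal symmetry. -/
def ARS {ι : Type*} (f : (ι → Bool) → ℝ) : Prop := ∀ a, f a = f (cmpl a)

/-- Minus arrow reversal symmetry. -/
def NegARS {ι : Type*} (f : (ι → Bool) → ℝ) : Prop := ∀ a, f a = - f (cmpl a)

/-- Extend an assignment on the variables other than `i, j` by `x_i = a`, `x_j = b`. -/
def extIJ {N : ℕ} (i j : Fin N) (a b : Bool)
    (β : {l : Fin N // l ≠ i ∧ l ≠ j} → Bool) : Fin N → Bool :=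
  fun l => if h1 : l = i then a else if h2 : l = j then b else β ⟨l, h1, h2⟩

/-- `f^{x_i ≠ x_j} = f_{ij}^{01} + f_{ij}^{10}`. -/
def neqP {N : ℕ} (f : (Fin N → Bool) → ℝ) (i j : Fin N) :
    ({l : Fin N // l ≠ i ∧ l ≠ j} → Bool) → ℝ :=
  fun β => f (extIJ i j false true β) + f (extIJ i j true false β)

/-- `f^{x_i ≠⁻ x_j} = f_{ij}^{01} - f_{ij}^{10}`. -/
def neqM {N : ℕ} (f : (Fin N → Bool) → ℝ) (i j : Fin N) :
    ({l : Fin N // l ≠ i ∧ l ≠ j} → Bool) → ℝ :=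
  fun β => f (extIJ i j false true β) - f (extIJ i j true false β)

lemma cmpl_extIJ {N : ℕ} (i j : Fin N) (a b : Bool)
    (β : {l : Fin N // l ≠ i ∧ l ≠ j} → Bool) :
    cmpl (extIJ i j a b β) = extIJ i j (!a) (!b) (cmpl β) := by
  funext l
  simp only [cmpl, extIJ]
  split_ifs <;> rfl

/-- swap: put `true` at `i`, `false` at `j`. -/
def swapT {N : ℕ} (i j : Fin N) (α : Fin N → Bool) : Fin N → Bool :=
  fun l => if l = i then true else if l = j then false else α l

lemma key {N : ℕ} (f : (Fin N → Bool) → ℝ) (i j : Fin N) (hij : i ≠ j)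
    (h : ARS (neqP f i j)) (α : Fin N → Bool) (hi : α i = false) (hj : α j = true) :
    f α - f (cmpl α) = -(f (swapT i j α) - f (cmpl (swapT i j α))) := by
  set β : {l : Fin N // l ≠ i ∧ l ≠ j} → Bool := fun l => α l.1 with hβ
  have e1 : extIJ i j false true β = α := by
    funext l
    simp only [extIJ, hβ]
    split_ifs with h1 h2
    · rw [h1, hi]
    · rw [h2, hj]
    · rfl
  have e2 : extIJ i j true false β = swapT i j α := by
    funext l
    simp only [extIJ, swapT, hβ]
    split_ifs <;> rfl
  have e3 : extIJ i j false true (cmpl β) = cmpl (swapT i j α) := by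
    funext l
    simp only [extIJ, cmpl, swapT, hβ]
    split_ifs <;> rfl
  have e4 : extIJ i j true false (cmpl β) = cmpl α := by
    funext l
    simp only [extIJ, cmpl, hβ]
    split_ifs with h1 h2
    · rw [h1, hi]; rfl
    · rw [h2, hj]; rfl
    · rfl
  have := h β
  simp only [neqP, e1, e2, e3, e4] at this
  linarith

lemma wtB_add_wtB_cmpl {ι : Type*} [Fintype ι] [DecidableEq ι] (a : ι → Bool) :
    wtB a + wtB (cmpl a) = Fintype.card ι := by
  unfold wtB cmpl
  have : (Finset.univ.filter fun i => (!(a i)) = true)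
      = Finset.univ.filter fun i => ¬(a i = true) := by
    apply Finset.filter_congr
    intro i _
    simp
  rw [this]
  exact Finset.card_filter_add_card_filter_not _

theorem stmt13 {n : ℕ} (hn : 2 ≤ n) (f : (Fin (2 * n) → Bool) → ℝ)
    (hEO : IsEOR f) :
    ARS f ↔ ∀ i j : Fin (2 * n), i ≠ j → ARS (neqP f i j) := by
  constructor
  · intro hf i j hij β
    simp only [neqP]
    rw [hf (extIJ i j false true β), hf (extIJ i j true false β),
      cmpl_extIJ, cmpl_extIJ]
    simp only [Bool.not_false, Bool.not_true]
    ring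
  · intro h α
    have hcard : Fintype.card (Fin (2 * n)) = 2 * n := Fintype.card_fin _
    by_cases hw : wtB α = n
    · -- find i with α i = false
      have hex0 : ∃ i, α i = false := by
        by_contra hc
        push_neg at hc
        have : wtB α = 2 * n := by
          unfold wtB
          have : (Finset.univ.filter fun i => α i = true) = Finset.univ := by
            apply Finset.filter_true_of_mem
            intro i _
            cases hai : α i
            · exact absurd hai (hc i)
            · rfl
          rw [this, Finset.card_univ, hcard]
        omega
      obtain ⟨i, hi⟩ := hex0
      have hcardS : 1 < (Finset.univ.filter fun l => α l = true).card := by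
        have : (Finset.univ.filter fun l => α l = true).card = wtB α := rfl
        omega
      obtain ⟨j, hjmem, k, hkmem, hjk⟩ := Finset.one_lt_card.mp hcardS
      simp only [Finset.mem_filter] at hjmem hkmem
      have hj : α j = true := hjmem.2
      have hk : α k = true := hkmem.2
      have hij : i ≠ j := by intro e; rw [e, hj] at hi; simp at hi
      have hik : i ≠ k := by intro e; rw [e, hk] at hi; simp at hi
      set α1 := swapT i j α with hα1
      set α2 := swapT j k α1 with hα2
      have h1j : α1 j = false := by simp [hα1, swapT, Ne.symm hij]
      have h1k : α1 k = true := by simp [hα1, swapT, Ne.symm hik, hjk.symm, hk]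
      have h1i : α1 i = true := by simp [hα1, swapT]
      have h2k : α2 k = false := by simp [hα2, swapT, hjk.symm]
      have h2i : α2 i = true := by simp [hα2, swapT, hij, hik, h1i]
      have hα3 : swapT k i α2 = α := by
        funext l
        simp only [swapT, hα2, hα1]
        by_cases hlk : l = k
        · simp [hlk, hk]
        · by_cases hli : l = i
          · simp [hlk, hli, hi, Ne.symm hik, hij, hik]
          · by_cases hlj : l = j
            · simp [hlk, hli, hlj, hj, Ne.symm hij, hjk]
            · simp [hlk, hli, hlj]
      have g1 := key f i j hij (h i j hij) α hi hj
      have g2 := key f j k hjk (h j k hjk) α1 h1j h1k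
      have g3 := key f k i (Ne.symm hik) (h k i (Ne.symm hik)) α2 h2k h2i
      rw [hα3] at g3
      linarith
    · have h1 : f α = 0 := hEO α (by rw [hcard]; omega)
      have h2 : f (cmpl α) = 0 := by
        apply hEO
        have := wtB_add_wtB_cmpl α
        rw [hcard] at this ⊢
        omega
      rw [h1, h2]
end

section
/- Let f be a real-valued EO signature of arity 2n ≥ 4. If for every pair of distinct indices i,j, both f^{x_i≠x_j} = f_{ij}^{01} + f_{ij}^{10} and f^{x_i≠⁻x_j} = f_{ij}^{01} − f_{ij}^{10} each satisfy ARS or -ARS, then f itself satisfies ARS or -ARS. -/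
open Finset

section AuxStmt15

/-- Swap the values at positions `i` and `j`. -/
def swap2 {N : ℕ} (i j : Fin N) (α : Fin N → Bool) : Fin N → Bool :=
  fun l => if l = i then α j else if l = j then α i else α l

lemma swap2_fst {N : ℕ} (i j : Fin N) (α : Fin N → Bool) : swap2 i j α i = α j := by
  simp [swap2]

lemma swap2_snd {N : ℕ} (i j : Fin N) (hij : i ≠ j) (α : Fin N → Bool) :
    swap2 i j α j = α i := by
  simp [swap2, hij.symm]

lemma swap2_other {N : ℕ} {i j l : Fin N} (hli : l ≠ i) (hlj : l ≠ j) (α : Fin N → Bool) :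
    swap2 i j α l = α l := by
  simp [swap2, hli, hlj]

lemma swap2_swap2 {N : ℕ} (i j : Fin N) (hij : i ≠ j) (α : Fin N → Bool) :
    swap2 i j (swap2 i j α) = α := by
  funext l
  rcases eq_or_ne l i with rfl | h1
  · rw [swap2_fst, swap2_snd _ _ hij]
  · rcases eq_or_ne l j with rfl | h2
    · rw [swap2_snd _ _ hij, swap2_fst]
    · rw [swap2_other h1 h2, swap2_other h1 h2]

lemma cmpl_swap2 {N : ℕ} (i j : Fin N) (α : Fin N → Bool) :
    cmpl (swap2 i j α) = swap2 i j (cmpl α) := by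
  funext l
  simp only [cmpl, swap2]
  split_ifs <;> rfl

lemma extIJ_res {N : ℕ} (i j : Fin N) (a b : Bool) (α : Fin N → Bool)
    (ha : α i = a) (hb : α j = b) :
    extIJ i j a b (fun l => α l.1) = α := by
  funext l
  unfold extIJ
  split_ifs with h1 h2
  · subst h1; exact ha.symm
  · subst h2; exact hb.symm
  · rfl

lemma extIJ_res_swap {N : ℕ} (i j : Fin N) (hij : i ≠ j) (a b : Bool) (α : Fin N → Bool)
    (ha : α i = a) (hb : α j = b) :
    extIJ i j b a (fun l => α l.1) = swap2 i j α := by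
  funext l
  unfold extIJ swap2
  split_ifs with h1 h2
  · subst h1; exact hb.symm
  · subst h2; exact ha.symm
  · rfl

/-- `D α = f(α) - f(ᾱ)`. -/
def Df {N : ℕ} (f : (Fin N → Bool) → ℝ) (α : Fin N → Bool) : ℝ := f α - f (cmpl α)

/-- `S α = f(α) + f(ᾱ)`. -/
def Sf {N : ℕ} (f : (Fin N → Bool) → ℝ) (α : Fin N → Bool) : ℝ := f α + f (cmpl α)

lemma neq_vals {N : ℕ} (f : (Fin N → Bool) → ℝ) (i j : Fin N) (hij : i ≠ j)
    (α : Fin N → Bool) (hi : α i = false) (hj : α j = true) :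
    neqP f i j (fun l => α l.1) = f α + f (swap2 i j α) ∧
    neqP f i j (cmpl (fun l => α l.1)) = f (cmpl (swap2 i j α)) + f (cmpl α) ∧
    neqM f i j (fun l => α l.1) = f α - f (swap2 i j α) ∧
    neqM f i j (cmpl (fun l => α l.1)) = f (cmpl (swap2 i j α)) - f (cmpl α) := by
  have hci : cmpl α i = true := by simp [cmpl, hi]
  have hcj : cmpl α j = false := by simp [cmpl, hj]
  have e1 : extIJ i j false true (fun l => α l.1) = α := extIJ_res i j false true α hi hj
  have e2 : extIJ i j true false (fun l => α l.1) = swap2 i j α :=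
    extIJ_res_swap i j hij false true α hi hj
  have hres : cmpl (fun (l : {l : Fin N // l ≠ i ∧ l ≠ j}) => α l.1)
      = fun l => (cmpl α) l.1 := rfl
  have e3 : extIJ i j false true (cmpl (fun l => α l.1)) = cmpl (swap2 i j α) := by
    rw [hres, extIJ_res_swap i j hij true false (cmpl α) hci hcj, cmpl_swap2]
  have e4 : extIJ i j true false (cmpl (fun l => α l.1)) = cmpl α := by
    rw [hres, extIJ_res i j true false (cmpl α) hci hcj]
  refine ⟨?_, ?_, ?_, ?_⟩ <;> simp only [neqP, neqM, e1, e2, e3, e4]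

lemma pair_DA {N : ℕ} (f : (Fin N → Bool) → ℝ) (i j : Fin N) (hij : i ≠ j)
    (h : ARS (neqP f i j)) :
    ∀ α : Fin N → Bool, α i ≠ α j → Df f α + Df f (swap2 i j α) = 0 := by
  have key : ∀ α : Fin N → Bool, α i = false → α j = true →
      Df f α + Df f (swap2 i j α) = 0 := by
    intro α hi hj
    obtain ⟨v1, v2, _, _⟩ := neq_vals f i j hij α hi hj
    have := h (fun l => α l.1)
    rw [v1, v2] at this
    simp only [Df]; linarith
  intro α hne
  cases hi : α i with
  | false =>
    have hj : α j = true := by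
      cases hj : α j with
      | false => rw [hi, hj] at hne; exact absurd rfl hne
      | true => rfl
    exact key α hi hj
  | true =>
    have hj : α j = false := by
      cases hj : α j with
      | false => rfl
      | true => rw [hi, hj] at hne; exact absurd rfl hne
    have h1 : swap2 i j α i = false := by rw [swap2_fst]; exact hj
    have h2 : swap2 i j α j = true := by rw [swap2_snd _ _ hij]; exact hi
    have := key (swap2 i j α) h1 h2
    rw [swap2_swap2 i j hij] at this
    linarith

lemma pair_SA {N : ℕ} (f : (Fin N → Bool) → ℝ) (i j : Fin N) (hij : i ≠ j)
    (h : NegARS (neqP f i j)) :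
    ∀ α : Fin N → Bool, α i ≠ α j → Sf f α + Sf f (swap2 i j α) = 0 := by
  have key : ∀ α : Fin N → Bool, α i = false → α j = true →
      Sf f α + Sf f (swap2 i j α) = 0 := by
    intro α hi hj
    obtain ⟨v1, v2, _, _⟩ := neq_vals f i j hij α hi hj
    have := h (fun l => α l.1)
    rw [v1, v2] at this
    simp only [Sf]; linarith
  intro α hne
  cases hi : α i with
  | false =>
    have hj : α j = true := by
      cases hj : α j with
      | false => rw [hi, hj] at hne; exact absurd rfl hne
      | true => rfl
    exact key α hi hj
  | true =>
    have hj : α j = false := by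
      cases hj : α j with
      | false => rfl
      | true => rw [hi, hj] at hne; exact absurd rfl hne
    have h1 : swap2 i j α i = false := by rw [swap2_fst]; exact hj
    have h2 : swap2 i j α j = true := by rw [swap2_snd _ _ hij]; exact hi
    have := key (swap2 i j α) h1 h2
    rw [swap2_swap2 i j hij] at this
    linarith

lemma pair_SS {N : ℕ} (f : (Fin N → Bool) → ℝ) (i j : Fin N) (hij : i ≠ j)
    (h : ARS (neqM f i j)) :
    ∀ α : Fin N → Bool, α i ≠ α j → Sf f α = Sf f (swap2 i j α) := by
  have key : ∀ α : Fin N → Bool, α i = false → α j = true →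
      Sf f α = Sf f (swap2 i j α) := by
    intro α hi hj
    obtain ⟨_, _, v3, v4⟩ := neq_vals f i j hij α hi hj
    have := h (fun l => α l.1)
    rw [v3, v4] at this
    simp only [Sf]; linarith
  intro α hne
  cases hi : α i with
  | false =>
    have hj : α j = true := by
      cases hj : α j with
      | false => rw [hi, hj] at hne; exact absurd rfl hne
      | true => rfl
    exact key α hi hj
  | true =>
    have hj : α j = false := by
      cases hj : α j with
      | false => rfl
      | true => rw [hi, hj] at hne; exact absurd rfl hne
    have h1 : swap2 i j α i = false := by rw [swap2_fst]; exact hj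
    have h2 : swap2 i j α j = true := by rw [swap2_snd _ _ hij]; exact hi
    have := key (swap2 i j α) h1 h2
    rw [swap2_swap2 i j hij] at this
    linarith

lemma pair_DS {N : ℕ} (f : (Fin N → Bool) → ℝ) (i j : Fin N) (hij : i ≠ j)
    (h : NegARS (neqM f i j)) :
    ∀ α : Fin N → Bool, α i ≠ α j → Df f α = Df f (swap2 i j α) := by
  have key : ∀ α : Fin N → Bool, α i = false → α j = true →
      Df f α = Df f (swap2 i j α) := by
    intro α hi hj
    obtain ⟨_, _, v3, v4⟩ := neq_vals f i j hij α hi hj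
    have := h (fun l => α l.1)
    rw [v3, v4] at this
    simp only [Df]; linarith
  intro α hne
  cases hi : α i with
  | false =>
    have hj : α j = true := by
      cases hj : α j with
      | false => rw [hi, hj] at hne; exact absurd rfl hne
      | true => rfl
    exact key α hi hj
  | true =>
    have hj : α j = false := by
      cases hj : α j with
      | false => rfl
      | true => rw [hi, hj] at hne; exact absurd rfl hne
    have h1 : swap2 i j α i = false := by rw [swap2_fst]; exact hj
    have h2 : swap2 i j α j = true := by rw [swap2_snd _ _ hij]; exact hi
    have := key (swap2 i j α) h1 h2
    rw [swap2_swap2 i j hij] at this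
    linarith

/-- One swap step: if both D and S are nonzero at α, exactly one of them flips sign. -/
lemma step_lemma {N : ℕ} (f : (Fin N → Bool) → ℝ) (i j : Fin N)
    (h1 : (∀ α : Fin N → Bool, α i ≠ α j → Df f α + Df f (swap2 i j α) = 0) ∨
          (∀ α : Fin N → Bool, α i ≠ α j → Sf f α + Sf f (swap2 i j α) = 0))
    (h2 : (∀ α : Fin N → Bool, α i ≠ α j → Df f α = Df f (swap2 i j α)) ∨
          (∀ α : Fin N → Bool, α i ≠ α j → Sf f α = Sf f (swap2 i j α)))
    (α : Fin N → Bool) (hne : α i ≠ α j) (hD : Df f α ≠ 0) (hS : Sf f α ≠ 0) :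
    (Df f (swap2 i j α) = - Df f α ∧ Sf f (swap2 i j α) = Sf f α) ∨
    (Df f (swap2 i j α) = Df f α ∧ Sf f (swap2 i j α) = - Sf f α) := by
  rcases h1 with hA | hA <;> rcases h2 with hB | hB
  · exact absurd (by have := hA α hne; have := hB α hne; linarith : Df f α = 0) hD
  · exact Or.inl ⟨by have := hA α hne; linarith, (hB α hne).symm⟩
  · exact Or.inr ⟨(hB α hne).symm, by have := hA α hne; linarith⟩
  · exact absurd (by have := hA α hne; have := hB α hne; linarith : Sf f α = 0) hS

lemma wtB_cmpl {N : ℕ} (α : Fin N → Bool) : wtB (cmpl α) = N - wtB α := by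
  have h := Finset.card_filter_add_card_filter_not
    (s := (univ : Finset (Fin N))) (p := fun l => α l = true)
  have he : (univ.filter fun l => (cmpl α) l = true)
      = univ.filter (fun l => ¬ (α l = true)) := by
    apply Finset.filter_congr
    intro l _
    simp [cmpl]
  simp only [wtB, he]
  have : ((univ : Finset (Fin N)).filter fun l => α l = true).card ≤ N := by
    calc _ ≤ (univ : Finset (Fin N)).card := Finset.card_filter_le _ _
    _ = N := by simp
  simp only [card_univ, Fintype.card_fin] at h
  omega

lemma wtB_le {N : ℕ} (α : Fin N → Bool) : wtB α ≤ N := by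
  calc wtB α ≤ (univ : Finset (Fin N)).card := Finset.card_filter_le _ _
  _ = N := by simp

/-- If D or S is nonzero at α, then α has weight n. -/
lemma wt_of_ne {n : ℕ} (f : (Fin (2 * n) → Bool) → ℝ) (hEO : IsEOR f)
    (α : Fin (2 * n) → Bool) (h : Df f α ≠ 0 ∨ Sf f α ≠ 0) : wtB α = n := by
  by_contra hw
  have h1 : f α = 0 := hEO α (by rw [Fintype.card_fin]; omega)
  have hle := wtB_le α
  have h2 : f (cmpl α) = 0 := by
    apply hEO
    rw [Fintype.card_fin, wtB_cmpl]
    omega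
  rcases h with h | h <;> simp [Df, Sf, h1, h2] at h

lemma exists_cross {N : ℕ} (α γ : Fin N → Bool) (hw : wtB α = wtB γ) (hne : α ≠ γ) :
    ∃ i, α i = true ∧ γ i = false := by
  by_contra h
  push_neg at h
  have hsub : (univ.filter fun l => α l = true) ⊆ (univ.filter fun l => γ l = true) := by
    intro l hl
    simp only [mem_filter, mem_univ, true_and] at hl ⊢
    have := h l hl
    cases hγ : γ l with
    | false => exact absurd hγ this
    | true => rfl
  have heq : (univ.filter fun l => α l = true) = (univ.filter fun l => γ l = true) :=
    Finset.eq_of_subset_of_card_le hsub (le_of_eq hw.symm)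
  apply hne
  funext l
  have : l ∈ (univ.filter fun l => α l = true) ↔ l ∈ (univ.filter fun l => γ l = true) := by
    rw [heq]
  simp only [mem_filter, mem_univ, true_and] at this
  cases hα : α l with
  | false =>
    cases hγ : γ l with
    | false => rfl
    | true => exact absurd (this.mpr hγ) (by rw [hα]; simp)
  | true => exact (this.mp hα).symm

/-- D and S have disjoint supports. -/
lemma triangle {n : ℕ} (hn : 2 ≤ n) (f : (Fin (2 * n) → Bool) → ℝ) (hEO : IsEOR f)
    (H1 : ∀ i j : Fin (2 * n), i ≠ j →
      (∀ α : Fin (2 * n) → Bool, α i ≠ α j → Df f α + Df f (swap2 i j α) = 0) ∨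
      (∀ α : Fin (2 * n) → Bool, α i ≠ α j → Sf f α + Sf f (swap2 i j α) = 0))
    (H2 : ∀ i j : Fin (2 * n), i ≠ j →
      (∀ α : Fin (2 * n) → Bool, α i ≠ α j → Df f α = Df f (swap2 i j α)) ∨
      (∀ α : Fin (2 * n) → Bool, α i ≠ α j → Sf f α = Sf f (swap2 i j α)))
    (α : Fin (2 * n) → Bool) (hD : Df f α ≠ 0) (hS : Sf f α ≠ 0) : False := by
  have hwt : wtB α = n := wt_of_ne f hEO α (Or.inl hD)
  have hFcard : (univ.filter fun l => α l = false).card = n := by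
    have h := Finset.card_filter_add_card_filter_not
      (s := (univ : Finset (Fin (2 * n)))) (p := fun l => α l = true)
    have he : (univ.filter fun l => ¬ (α l = true)) = univ.filter (fun l => α l = false) := by
      apply Finset.filter_congr; intro l _; simp
    rw [he] at h
    simp only [card_univ, Fintype.card_fin] at h
    have : wtB α = n := hwt
    unfold wtB at this
    omega
  obtain ⟨i, hi, k, hk, hik⟩ := Finset.one_lt_card.mp
    (by rw [hFcard]; omega : 1 < (univ.filter fun l => α l = false).card)
  obtain ⟨j, hj⟩ := Finset.card_pos.mp
    (by unfold wtB at hwt; rw [hwt]; omega : 0 < (univ.filter fun l => α l = true).card)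
  simp only [mem_filter, mem_univ, true_and] at hi hk hj
  have hij : i ≠ j := by rintro rfl; rw [hi] at hj; exact Bool.noConfusion hj
  have hkj : k ≠ j := by rintro rfl; rw [hk] at hj; exact Bool.noConfusion hj
  have hki : k ≠ i := Ne.symm hik
  have hv1i : swap2 i j α i = true := by rw [swap2_fst, hj]
  have hv1j : swap2 i j α j = false := by rw [swap2_snd i j hij, hi]
  have hv1k : swap2 i j α k = false := by rw [swap2_other hki hkj, hk]
  have hv2i : swap2 i k (swap2 i j α) i = false := by rw [swap2_fst, hv1k]
  have hv2k : swap2 i k (swap2 i j α) k = true := by rw [swap2_snd i k hik, hv1i]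
  have hv2j : swap2 i k (swap2 i j α) j = false := by
    rw [swap2_other hij.symm hkj.symm, hv1j]
  have e3 : swap2 j k (swap2 i k (swap2 i j α)) = α := by
    funext l
    rcases eq_or_ne l j with heq | hlj
    · rw [heq, swap2_fst, hv2k, hj]
    · rcases eq_or_ne l k with heq | hlk
      · rw [heq, swap2_snd j k hkj.symm, hv2j, hk]
      · rcases eq_or_ne l i with heq | hli
        · rw [heq, swap2_other hij hki.symm, hv2i, hi]
        · rw [swap2_other hlj hlk, swap2_other hli hlk, swap2_other hli hlj]
  have flip1 : α i ≠ α j := by rw [hi, hj]; simp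
  have flip2 : swap2 i j α i ≠ swap2 i j α k := by rw [hv1i, hv1k]; simp
  have flip3 : swap2 i k (swap2 i j α) j ≠ swap2 i k (swap2 i j α) k := by
    rw [hv2j, hv2k]; simp
  have s1 := step_lemma f i j (H1 i j hij) (H2 i j hij) α flip1 hD hS
  have hD1 : Df f (swap2 i j α) ≠ 0 := by
    rcases s1 with ⟨e, _⟩ | ⟨e, _⟩ <;> rw [e] <;> simpa using hD
  have hS1 : Sf f (swap2 i j α) ≠ 0 := by
    rcases s1 with ⟨_, e⟩ | ⟨_, e⟩ <;> rw [e] <;> simpa using hS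
  have s2 := step_lemma f i k (H1 i k hik) (H2 i k hik) (swap2 i j α) flip2 hD1 hS1
  have hD2 : Df f (swap2 i k (swap2 i j α)) ≠ 0 := by
    rcases s2 with ⟨e, _⟩ | ⟨e, _⟩ <;> rw [e] <;> simpa using hD1
  have hS2 : Sf f (swap2 i k (swap2 i j α)) ≠ 0 := by
    rcases s2 with ⟨_, e⟩ | ⟨_, e⟩ <;> rw [e] <;> simpa using hS1
  have s3 := step_lemma f j k (H1 j k hkj.symm) (H2 j k hkj.symm)
    (swap2 i k (swap2 i j α)) flip3 hD2 hS2
  rw [e3] at s3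
  rcases s1 with ⟨d1, e1⟩ | ⟨d1, e1⟩ <;> rcases s2 with ⟨d2, e2⟩ | ⟨d2, e2⟩ <;>
    rcases s3 with ⟨d3, e3'⟩ | ⟨d3, e3'⟩ <;>
    first
      | exact hD (by linarith)
      | exact hS (by linarith)

lemma no_both {n : ℕ} (hn : 2 ≤ n) (f : (Fin (2 * n) → Bool) → ℝ) (hEO : IsEOR f)
    (H1 : ∀ i j : Fin (2 * n), i ≠ j →
      (∀ α : Fin (2 * n) → Bool, α i ≠ α j → Df f α + Df f (swap2 i j α) = 0) ∨
      (∀ α : Fin (2 * n) → Bool, α i ≠ α j → Sf f α + Sf f (swap2 i j α) = 0))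
    (H2 : ∀ i j : Fin (2 * n), i ≠ j →
      (∀ α : Fin (2 * n) → Bool, α i ≠ α j → Df f α = Df f (swap2 i j α)) ∨
      (∀ α : Fin (2 * n) → Bool, α i ≠ α j → Sf f α = Sf f (swap2 i j α))) :
    ∀ d : ℕ, ∀ α γ : Fin (2 * n) → Bool,
      (univ.filter fun l => α l ≠ γ l).card ≤ d → Df f α ≠ 0 → Sf f γ ≠ 0 → False := by
  intro d
  induction d with
  | zero =>
    intro α γ hc hD hS
    have hemp : (univ.filter fun l => α l ≠ γ l) = ∅ :=
      Finset.card_eq_zero.mp (Nat.le_zero.mp hc)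
    have heq : α = γ := by
      funext l
      by_contra hl
      have : l ∈ (univ.filter fun l => α l ≠ γ l) := mem_filter.mpr ⟨mem_univ l, hl⟩
      rw [hemp] at this
      exact absurd this (notMem_empty l)
    exact triangle hn f hEO H1 H2 α hD (heq ▸ hS)
  | succ d ih =>
    intro α γ hc hD hS
    by_cases heq : α = γ
    · exact triangle hn f hEO H1 H2 α hD (heq ▸ hS)
    · have hwα : wtB α = n := wt_of_ne f hEO α (Or.inl hD)
      have hwγ : wtB γ = n := wt_of_ne f hEO γ (Or.inr hS)
      obtain ⟨i, hαi, hγi⟩ := exists_cross α γ (hwα.trans hwγ.symm) heq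
      obtain ⟨j, hγj, hαj⟩ := exists_cross γ α (hwγ.trans hwα.symm) (Ne.symm heq)
      have hij : i ≠ j := by rintro rfl; rw [hαi] at hαj; exact Bool.noConfusion hαj
      have flipα : α i ≠ α j := by rw [hαi, hαj]; simp
      have flipγ : γ i ≠ γ j := by rw [hγi, hγj]; simp
      have hD' : Df f (swap2 i j α) ≠ 0 := by
        rcases H1 i j hij with hA | hA
        · have h := hA α flipα
          have : Df f (swap2 i j α) = - Df f α := by linarith
          rw [this]; simpa using hD
        · rcases H2 i j hij with hB | hB
          · rw [← hB α flipα]; exact hD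
          · have h1 := hA γ flipγ
            have h2 := hB γ flipγ
            exact absurd (by linarith : Sf f γ = 0) hS
      have hmemi : i ∈ (univ.filter fun l => α l ≠ γ l) :=
        mem_filter.mpr ⟨mem_univ i, by rw [hαi, hγi]; simp⟩
      have hmemj : j ∈ (univ.filter fun l => α l ≠ γ l) :=
        mem_filter.mpr ⟨mem_univ j, by rw [hαj, hγj]; simp⟩
      have hsub : (univ.filter fun l => swap2 i j α l ≠ γ l) ⊆
          ((univ.filter fun l => α l ≠ γ l).erase i).erase j := by
        intro l hl
        simp only [mem_filter, mem_univ, true_and] at hl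
        have hli : l ≠ i := by
          intro heq2
          apply hl
          rw [heq2, swap2_fst, hαj, hγi]
        have hlj : l ≠ j := by
          intro heq2
          apply hl
          rw [heq2, swap2_snd i j hij, hαi, hγj]
        rw [swap2_other hli hlj] at hl
        exact mem_erase.mpr ⟨hlj, mem_erase.mpr ⟨hli, mem_filter.mpr ⟨mem_univ l, hl⟩⟩⟩
      have h1c := Finset.card_le_card hsub
      rw [Finset.card_erase_of_mem (Finset.mem_erase.mpr ⟨hij.symm, hmemj⟩),
        Finset.card_erase_of_mem hmemi] at h1c
      have hle : (univ.filter fun l => swap2 i j α l ≠ γ l).card ≤ d := by omega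
      exact ih (swap2 i j α) γ hle hD' hS

end AuxStmt15

theorem stmt15 {n : ℕ} (hn : 2 ≤ n) (f : (Fin (2 * n) → Bool) → ℝ)
    (hEO : IsEOR f)
    (hP : ∀ i j : Fin (2 * n), i ≠ j → ARS (neqP f i j) ∨ NegARS (neqP f i j))
    (hM : ∀ i j : Fin (2 * n), i ≠ j → ARS (neqM f i j) ∨ NegARS (neqM f i j)) :
    ARS f ∨ NegARS f := by
  have H1 : ∀ i j : Fin (2 * n), i ≠ j →
      (∀ α : Fin (2 * n) → Bool, α i ≠ α j → Df f α + Df f (swap2 i j α) = 0) ∨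
      (∀ α : Fin (2 * n) → Bool, α i ≠ α j → Sf f α + Sf f (swap2 i j α) = 0) := by
    intro i j hij
    rcases hP i j hij with h | h
    · exact Or.inl (pair_DA f i j hij h)
    · exact Or.inr (pair_SA f i j hij h)
  have H2 : ∀ i j : Fin (2 * n), i ≠ j →
      (∀ α : Fin (2 * n) → Bool, α i ≠ α j → Df f α = Df f (swap2 i j α)) ∨
      (∀ α : Fin (2 * n) → Bool, α i ≠ α j → Sf f α = Sf f (swap2 i j α)) := by
    intro i j hij
    rcases hM i j hij with h | h
    · exact Or.inr (pair_SS f i j hij h)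
    · exact Or.inl (pair_DS f i j hij h)
  by_cases hD : ∀ a, Df f a = 0
  · left
    intro a
    have := hD a
    simp only [Df] at this
    linarith
  · push_neg at hD
    obtain ⟨α, hα⟩ := hD
    right
    intro a
    have hS : Sf f a = 0 := by
      by_contra hS
      exact no_both hn f hEO H1 H2 ((univ.filter fun l => α l ≠ a l).card) α a
        le_rfl hα hS
    simp only [Sf] at hS
    linarith
end

section
/- An EO signature f satisfies the two conditions of Definition A (f = δ₁^{⊗m} ⊗ h with m ≥ 1, h of positive arity, δ₁ ∤ h, h ∉ 𝒜, and h_i^0 ∈ 𝒜 for all i) if and only if it satisfies the two conditions of Definition B (f = δ₁^{⊗m} ⊗ h with m ≥ 1, h of positive arity, δ₁ ∤ h, δ₀ ∤ h, and h_i^0 ∈ 𝒜 for all i). -/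
open Finset

lemma xor3_invol {ι : Type*} (u v x : ι → Bool) : xor3 u v (xor3 u v x) = x := by
  funext j
  simp only [xor3]
  cases u j <;> cases v j <;> cases x j <;> rfl

/-- `f = δ₁^{⊗m} ⊗ h` is an EO signature: `h` is nonempty, of positive arity `n`,
and every support vector of `f` (i.e. `m` ones followed by `x ∈ S(h)`) has weight
half of the arity `m + n`. Definition A requires `δ₁ ∤ h`, `h ∉ 𝒜` and all `h_i^0 ∈ 𝒜`;
Definition B requires `δ₁ ∤ h`, `δ₀ ∤ h` and all `h_i^0 ∈ 𝒜`. -/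
theorem stmt17 {m n : ℕ} (hm : 1 ≤ m) (hn : 1 ≤ n)
    (h : Finset (Fin n → Bool)) (hne : h.Nonempty)
    (hEO : ∀ x ∈ h, 2 * (m + wtB x) = m + n) :
    ((∀ i : Fin n, ∃ x ∈ h, x i = false) ∧ ¬ AffineS h ∧
        (∀ i : Fin n, AffineS (pinS h i false)))
      ↔
    ((∀ i : Fin n, ∃ x ∈ h, x i = false) ∧ (∀ i : Fin n, ∃ x ∈ h, x i = true) ∧
        (∀ i : Fin n, AffineS (pinS h i false))) := by
  constructor
  · rintro ⟨h1, hNA, hpin⟩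
    refine ⟨h1, ?_, hpin⟩
    intro i
    by_contra hc
    push_neg at hc
    have hall : ∀ x ∈ h, x i = false := by
      intro x hx
      simpa using hc x hx
    apply hNA
    refine ⟨hne, ?_⟩
    intro a ha b hb c hcc
    obtain ⟨-, hP⟩ := hpin i
    have hmem : ∀ x ∈ h, (fun j : {j : Fin n // j ≠ i} => x j.1) ∈ pinS h i false := by
      intro x hx
      exact Finset.mem_image.mpr ⟨x, Finset.mem_filter.mpr ⟨hx, hall x hx⟩, rfl⟩
    have hx3 : xor3 (fun j : {j : Fin n // j ≠ i} => a j.1)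
        (fun j => b j.1) (fun j => c j.1) ∈ pinS h i false :=
      hP _ (hmem a ha) _ (hmem b hb) _ (hmem c hcc)
    obtain ⟨y, hy, hyeq⟩ := Finset.mem_image.mp hx3
    obtain ⟨hyh, hyi⟩ := Finset.mem_filter.mp hy
    have : y = xor3 a b c := by
      funext j
      by_cases hj : j = i
      · subst hj
        simp [hyi, xor3, hall a ha, hall b hb, hall c hcc]
      · have := congrFun hyeq ⟨j, hj⟩
        simpa [xor3] using this
    rwa [← this]
  · rintro ⟨h1, h2, hpin⟩
    refine ⟨h1, ?_, hpin⟩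
    rintro ⟨-, hclose⟩
    -- balanced coordinates
    have hbal : ∀ i : Fin n, (h.filter fun x => x i = true).card
        = (h.filter fun x => x i = false).card := by
      intro i
      obtain ⟨u, hu, hui⟩ := h1 i
      obtain ⟨v, hv, hvi⟩ := h2 i
      apply Finset.card_bij (fun x _ => xor3 u v x)
      · intro x hx
        obtain ⟨hxh, hxi⟩ := Finset.mem_filter.mp hx
        refine Finset.mem_filter.mpr ⟨hclose u hu v hv x hxh, ?_⟩
        simp [xor3, hui, hvi, hxi]
      · intro a ha b hb hab
        have := congrArg (xor3 u v) hab
        rwa [xor3_invol, xor3_invol] at this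
      · intro y hy
        obtain ⟨hyh, hyi⟩ := Finset.mem_filter.mp hy
        refine ⟨xor3 u v y, Finset.mem_filter.mpr ⟨hclose u hu v hv y hyh, ?_⟩, ?_⟩
        · simp [xor3, hui, hvi, hyi]
        · rw [xor3_invol]
    have hsplit : ∀ i : Fin n, (h.filter fun x => x i = true).card
        + (h.filter fun x => x i = false).card = h.card := by
      intro i
      have := Finset.card_filter_add_card_filter_not
        (s := h) (p := fun x => x i = true)
      simpa using this
    have hsum : ∑ x ∈ h, wtB x = ∑ i : Fin n, (h.filter fun x => x i = true).card := by
      unfold wtB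
      simp_rw [Finset.card_filter]
      rw [Finset.sum_comm]
    have e2 : 2 * ∑ x ∈ h, wtB x = n * h.card := by
      rw [hsum, Finset.mul_sum]
      have : ∀ i : Fin n, 2 * (h.filter fun x => x i = true).card = h.card := by
        intro i
        rw [two_mul]
        rw [← hsplit i, hbal i]
      rw [Finset.sum_congr rfl fun i _ => this i]
      simp [mul_comm]
    have e1 : 2 * (m * h.card + ∑ x ∈ h, wtB x) = (m + n) * h.card := by
      have : ∑ x ∈ h, 2 * (m + wtB x) = ∑ x ∈ h, (m + n) :=
        Finset.sum_congr rfl fun x hx => by rw [hEO x hx]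
      rw [Finset.sum_const, smul_eq_mul] at this
      rw [← Finset.mul_sum] at this
      rw [Finset.sum_add_distrib, Finset.sum_const, smul_eq_mul, mul_comm h.card m] at this
      rw [this, mul_comm]
    have hc1 : 1 ≤ h.card := Finset.card_pos.mpr hne
    have key : m * h.card = 0 := by
      have h3 := e1
      rw [Nat.mul_add, e2, add_mul] at h3
      -- h3 : 2*(m*card) + n*card = m*card + n*card
      have h4 := Nat.add_right_cancel h3
      rw [two_mul] at h4
      have h5 : m * h.card + m * h.card = 0 + m * h.card := by
        rw [zero_add]; exact h4
      exact Nat.add_right_cancel h5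
    exact absurd key (Nat.pos_iff_ne_zero.mp (Nat.mul_pos hm hc1))
end
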